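/- arXiv:1008.5275 — 5 statements merged into one kernel-verified Lean document; each statement's English description precedes it below -/
import Mathlib

section
/- Let 𝒫 = (P_1, …, P_r) be an r-partition in ℝ^d. Then 0 ∈ aff(Φ(𝒫)) if and only if 𝒫 has an affine Tverberg point, i.e., ⋂_{i=1}^r aff(P_i) ≠ ∅. -/
open Finset

namespace BMZ

noncomputable section

/-- Points of `ℝ^d`. -/
abbrev Pt (d : ℕ) := EuclideanSpace ℝ (Fin d)

/-- The space `ℝ^N`, `N = (d+1)(r-1)`, with `r = s+2`, presented with double
indices `(k, l) ∈ [d+1] × [r-1]`. -/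
abbrev CSp (d s : ℕ) := EuclideanSpace ℝ (Fin (d + 1) × Fin (s + 1))

/-- `w` is the vertex set of a regular `(r-1)`-dimensional simplex centered at the
origin (here `r = s+2`): the vertices are affinely independent, pairwise
equidistant with a positive common distance, and their barycenter is the origin. -/
def IsRegularSimplex {s : ℕ} (w : Fin (s + 2) → EuclideanSpace ℝ (Fin (s + 1))) : Prop :=
  AffineIndependent ℝ w ∧
    (∃ e : ℝ, 0 < e ∧ ∀ i j, i ≠ j → dist (w i) (w j) = e) ∧
    ∑ i, w i = 0

/-- `x⁺ = (x, 1) ∈ ℝ^{d+1}`. -/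
def xplus {d : ℕ} (x : Pt d) : Fin (d + 1) → ℝ := Fin.snoc (x : Fin d → ℝ) 1

/-- The `i`-th clone `φ_i(x) := x⁺ ⊗ w_i ∈ ℝ^N`. -/
def clone {d s : ℕ} (w : Fin (s + 2) → EuclideanSpace ℝ (Fin (s + 1)))
    (x : Pt d) (i : Fin (s + 2)) : CSp d s :=
  WithLp.toLp 2 (fun kl : Fin (d + 1) × Fin (s + 1) => xplus x kl.1 * w i kl.2)

/-- The Sarkaria–Onn transform `Φ(𝒫)` of an `r`-partition `𝒫 = (P_1, …, P_r)`:
for every point `p ∈ P_i` we put the `i`-th clone of `p` into `Φ(𝒫)`. -/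
def Phi {d s : ℕ} (w : Fin (s + 2) → EuclideanSpace ℝ (Fin (s + 1)))
    (P : Fin (s + 2) → Finset (Pt d)) : Set (CSp d s) :=
  ⋃ i, (fun p => clone w p i) '' (P i : Set (Pt d))

/-- `N = (d+1)(r-1)`, the number of points of a BMZ-collection other than `z`. -/
abbrev NN (d s : ℕ) : ℕ := (d + 1) * (s + 1)

/-- Indices of the points `c_1, …, c_{N+1}` of a BMZ-collection (the last point
is `z`). A BMZ-collection is an injective map `c : Idx d s → Pt d`, with the color
classes `C_1, …, C_{d+2}` consisting of consecutive points as given by `colorOf`. -/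
abbrev Idx (d s : ℕ) := Fin (NN d s + 1)

/-- The color of the `i`-th point: each of the first `d+1` classes consists of
`r-1` consecutive points, and the last class is the singleton `{z}`. -/
def colorOf (d s : ℕ) (i : Idx d s) : Fin (d + 2) :=
  if h : (i : ℕ) < NN d s then
    Fin.castSucc ⟨(i : ℕ) / (s + 1),
      Nat.div_lt_of_lt_mul (by rw [Nat.mul_comm]; exact h)⟩
  else Fin.last (d + 1)

/-- Maximal rainbow `r`-partitions `ℛ = (R_1, …, R_r) ∈ 𝔅(𝒞)` (with `z ∈ R_r`) are
in bijective correspondence with tuples of permutations `π_k` of `[r]`, one for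
each of the first `d+1` colors: `π_k j` is the index of the class containing the
`j`-th point of `C_k` for `j ≤ r-1`, and `π_k r` is the index of the unique class
containing no point of `C_k`. -/
abbrev PartEnc (d s : ℕ) := Fin (d + 1) → Equiv.Perm (Fin (s + 2))

/-- The class of the `i`-th point in the partition encoded by `σ`; the point `z`
lies in the last class. -/
def classOf {d s : ℕ} (σ : PartEnc d s) (i : Idx d s) : Fin (s + 2) :=
  if h : (i : ℕ) < NN d s then
    σ ⟨(i : ℕ) / (s + 1), Nat.div_lt_of_lt_mul (by rw [Nat.mul_comm]; exact h)⟩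
      (Fin.castSucc ⟨(i : ℕ) % (s + 1), Nat.mod_lt _ (Nat.succ_pos s)⟩)
  else Fin.last (s + 1)

variable {d s : ℕ}

open Classical in
/-- The `k`-th color class of the configuration `c`, as a finite set of points. -/
def colorClass (c : Idx d s → Pt d) (k : Fin (d + 2)) : Finset (Pt d) :=
  (Finset.univ.filter fun i => colorOf d s i = k).image c

open Classical in
/-- The class `R_i` of the partition encoded by `σ`, as a finite set of points. -/
def classSet (c : Idx d s → Pt d) (σ : PartEnc d s) (i : Fin (s + 2)) : Finset (Pt d) :=
  (Finset.univ.filter fun j => classOf σ j = i).image c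

/-- `σ` encodes a Tverberg partition: the convex hulls of its classes have a
common point. -/
def IsTverberg (c : Idx d s → Pt d) (σ : PartEnc d s) : Prop :=
  (⋂ i, convexHull ℝ (classSet c σ i : Set (Pt d))).Nonempty

/-- The clones of all the points of the configuration, w.r.t. the partition `σ`. -/
def allClones (w : Fin (s + 2) → EuclideanSpace ℝ (Fin (s + 1)))
    (c : Idx d s → Pt d) (σ : PartEnc d s) : Idx d s → CSp d s :=
  fun i => clone w (c i) (classOf σ i)

/-- The vertices of `F_ℛ = conv Φ(ℛ - z)`, ordered by the numbering of the points. -/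
def rows (w : Fin (s + 2) → EuclideanSpace ℝ (Fin (s + 1)))
    (c : Idx d s → Pt d) (σ : PartEnc d s) : Fin (NN d s) → CSp d s :=
  fun i => allClones w c σ i.castSucc

/-- `Φ(ℛ - a)`: the clones of all points except `a`. -/
def PhiMinus (w : Fin (s + 2) → EuclideanSpace ℝ (Fin (s + 1)))
    (c : Idx d s → Pt d) (σ : PartEnc d s) (a : Idx d s) : Set (CSp d s) :=
  allClones w c σ '' {i | i ≠ a}

/-- The simplex `F_ℛ = conv Φ(ℛ - z)`. -/
def Fface (w : Fin (s + 2) → EuclideanSpace ℝ (Fin (s + 1)))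
    (c : Idx d s → Pt d) (σ : PartEnc d s) : Set (CSp d s) :=
  convexHull ℝ (Set.range (rows w c σ))

/-- `𝒞` is in sufficiently general position: each `Φ(ℛ - z)` is affinely
independent, and `0 ∉ aff Φ(ℛ - a)` for all `ℛ ∈ 𝔅(𝒞)` and `a ∈ C`. -/
def SuffGenPos (w : Fin (s + 2) → EuclideanSpace ℝ (Fin (s + 1)))
    (c : Idx d s → Pt d) : Prop :=
  (∀ σ : PartEnc d s, AffineIndependent ℝ (rows w c σ)) ∧
  (∀ (σ : PartEnc d s) (a : Idx d s), (0 : CSp d s) ∉ affineSpan ℝ (PhiMinus w c σ a))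

/-- A ridge `conv Φ(ℛ - z - a)`, `a ∈ C \ {z}`. -/
def ridge (w : Fin (s + 2) → EuclideanSpace ℝ (Fin (s + 1)))
    (c : Idx d s → Pt d) (σ : PartEnc d s) (a : Fin (NN d s)) : Set (CSp d s) :=
  convexHull ℝ (rows w c σ '' {i | i ≠ a})

/-- `𝒞` is in almost general position: all ridges avoid the origin. -/
def AlmostGenPos (w : Fin (s + 2) → EuclideanSpace ℝ (Fin (s + 1)))
    (c : Idx d s → Pt d) : Prop :=
  ∀ (σ : PartEnc d s) (a : Fin (NN d s)), (0 : CSp d s) ∉ ridge w c σ a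

/-- The ray emanating from `0` in the direction `u`. -/
def raySet (u : CSp d s) : Set (CSp d s) := {x | ∃ t : ℝ, 0 ≤ t ∧ x = t • u}

/-- A ray emanating from `0` is generic for `𝒞` if it intersects no ridge. -/
def GenericRay (w : Fin (s + 2) → EuclideanSpace ℝ (Fin (s + 1)))
    (c : Idx d s → Pt d) (u : CSp d s) : Prop :=
  ∀ (σ : PartEnc d s) (a : Fin (NN d s)), ∀ x ∈ raySet u, x ∉ ridge w c σ a

/-- The combinatorial sign `csgn(ℛ) = ∏_k sgn(π_k)`. -/
def csgn (σ : PartEnc d s) : ℤ := ∏ k, (Equiv.Perm.sign (σ k) : ℤ)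

/-- The sign of a real number, as an integer. -/
def sgnR (x : ℝ) : ℤ := if 0 < x then 1 else if x < 0 then -1 else 0

/-- The geometric sign `gsgn(ℛ)`: the sign of the determinant of the `N × N`
matrix whose rows are the vertices of `F_ℛ`, ordered by the numbering of the
points of `C`. -/
def gsgn (w : Fin (s + 2) → EuclideanSpace ℝ (Fin (s + 1)))
    (c : Idx d s → Pt d) (σ : PartEnc d s) : ℤ :=
  sgnR (Matrix.det (Matrix.of fun i j : Fin (NN d s) =>
    rows w c σ i (finProdFinEquiv.symm j)))

/-- The sign `sgn(ℛ) = gsgn(ℛ) ⬝ csgn(ℛ)`. -/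
def psgn (w : Fin (s + 2) → EuclideanSpace ℝ (Fin (s + 1)))
    (c : Idx d s → Pt d) (σ : PartEnc d s) : ℤ :=
  gsgn w c σ * csgn σ

/-- `z* = φ_r(z)`. -/
def zstar (w : Fin (s + 2) → EuclideanSpace ℝ (Fin (s + 1)))
    (c : Idx d s → Pt d) : CSp d s :=
  clone w (c (Fin.last (NN d s))) (Fin.last (s + 1))

open Classical in
/-- The degree of `𝒞` measured along the ray from `0` in direction `u`:
`deg_ψ(𝒞) = Σ_{ℛ ∈ 𝔅(𝒞), ψ ∩ F_ℛ ≠ ∅} sgn(ℛ)`. -/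
def degRay (w : Fin (s + 2) → EuclideanSpace ℝ (Fin (s + 1)))
    (c : Idx d s → Pt d) (u : CSp d s) : ℤ :=
  ∑ σ : PartEnc d s, if (raySet u ∩ Fface w c σ).Nonempty then psgn w c σ else 0

/-- The degree `deg(𝒞)`, measured along the ray `ρ` emanating from `0` in the
direction `-z*`. -/
def degC (w : Fin (s + 2) → EuclideanSpace ℝ (Fin (s + 1)))
    (c : Idx d s → Pt d) : ℤ :=
  degRay w c (-(zstar w c))

end

end BMZ


section Aux

open Finset

private lemma mem_affineSpan_image_iff' {V : Type*} [AddCommGroup V] [Module ℝ V]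
    {ι : Type*} (v : ι → V) (T : Set ι) (x : V) :
    x ∈ affineSpan ℝ (v '' T) ↔
      ∃ (fs : Finset ι) (wt : ι → ℝ), ↑fs ⊆ T ∧ ∑ i ∈ fs, wt i = 1 ∧
        x = ∑ i ∈ fs, wt i • v i := by
  classical
  rw [Set.image_eq_range, mem_affineSpan_iff_eq_affineCombination]
  constructor
  · rintro ⟨fs, wtt, hsum, hx⟩
    refine ⟨fs.map ⟨Subtype.val, Subtype.val_injective⟩,
      fun i => if h : i ∈ T then (if (⟨i, h⟩ : T) ∈ fs then wtt ⟨i, h⟩ else 0) else 0, ?_, ?_, ?_⟩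
    · intro i hi
      simp only [Finset.coe_map, Set.mem_image, Finset.mem_coe] at hi
      obtain ⟨y, _, rfl⟩ := hi
      exact y.2
    · rw [Finset.sum_map]
      rw [← hsum]
      apply Finset.sum_congr rfl
      intro y hy
      simp only [Function.Embedding.coeFn_mk]
      rw [dif_pos y.2]
      simp only [Subtype.coe_eta]
      rw [if_pos hy]
    · rw [hx, fs.affineCombination_eq_linear_combination _ _ hsum, Finset.sum_map]
      apply Finset.sum_congr rfl
      intro y hy
      simp only [Function.Embedding.coeFn_mk]
      rw [dif_pos y.2]
      simp only [Subtype.coe_eta]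
      rw [if_pos hy]
  · rintro ⟨fs, wt, hsub, hsum, rfl⟩
    have hinj : Function.Injective (fun y : {a // a ∈ fs} => (⟨y.1, hsub y.2⟩ : T)) := by
      intro a b h
      exact Subtype.ext (Subtype.mk_eq_mk.mp h)
    refine ⟨fs.attach.map ⟨_, hinj⟩, fun y => wt y.val, ?_, ?_⟩
    · rw [Finset.sum_map]
      simp only [Function.Embedding.coeFn_mk]
      rw [Finset.sum_attach fs wt]
      exact hsum
    · rw [Finset.affineCombination_eq_linear_combination, Finset.sum_map]
      · simp only [Function.Embedding.coeFn_mk]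
        rw [Finset.sum_attach fs (fun i => wt i • v i)]
      · rw [Finset.sum_map]
        simp only [Function.Embedding.coeFn_mk]
        rw [Finset.sum_attach fs wt]
        exact hsum

private lemma esum_apply {γ ι : Type*} (s : Finset γ) (f : γ → EuclideanSpace ℝ ι) (a : ι) :
    (∑ x ∈ s, f x) a = ∑ x ∈ s, f x a :=
  by rw [WithLp.ofLp_sum, Finset.sum_apply]

private lemma esmul_apply {ι : Type*} (c : ℝ) (f : EuclideanSpace ℝ ι) (a : ι) :
    (c • f) a = c * f a := rfl

open BMZ in
private lemma isreg_const {s : ℕ} {w : Fin (s + 2) → EuclideanSpace ℝ (Fin (s + 1))}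
    (hw : IsRegularSimplex w) {v : Fin (s + 2) → ℝ}
    (h : ∑ i, v i • w i = 0) (i j : Fin (s + 2)) : v i = v j := by
  set t : ℝ := (∑ k, v k) / ((s : ℝ) + 2) with ht
  have hne : ((s : ℝ) + 2) ≠ 0 := by positivity
  have hz : ∀ e ∈ Finset.univ, v e - t = 0 := by
    apply affineIndependent_iff.1 hw.1 Finset.univ (fun e => v e - t)
    · rw [Finset.sum_sub_distrib, Finset.sum_const, Finset.card_univ, Fintype.card_fin]
      simp only [nsmul_eq_mul, ht]
      push_cast
      field_simp
      ring
    · have heq : ∑ e, (v e - t) • w e = ∑ e, v e • w e - t • ∑ e, w e := by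
        rw [Finset.smul_sum, ← Finset.sum_sub_distrib]
        apply Finset.sum_congr rfl
        intro e _
        rw [sub_smul]
      rw [heq, h, hw.2.2, smul_zero, sub_zero]
  have hi := sub_eq_zero.mp (hz i (Finset.mem_univ i))
  have hj := sub_eq_zero.mp (hz j (Finset.mem_univ j))
  rw [hi, hj]

end Aux

open BMZ in
/-- Let `𝒫 = (P_1, …, P_r)` be an `r`-partition in `ℝ^d` (here `r = s+2 ≥ 2`).
Then `0 ∈ aff(Φ(𝒫))` iff `𝒫` has an affine Tverberg point,
i.e. `⋂_i aff(P_i) ≠ ∅`. -/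
theorem zero_mem_affineSpan_iff (d s : ℕ) (hd : 1 ≤ d)
    (w : Fin (s + 2) → EuclideanSpace ℝ (Fin (s + 1))) (hw : IsRegularSimplex w)
    (P : Fin (s + 2) → Finset (Pt d))
    (hP : Pairwise fun i i' => Disjoint (P i) (P i')) :
    (0 : CSp d s) ∈ affineSpan ℝ (Phi w P) ↔
      (⋂ i, (affineSpan ℝ (P i : Set (Pt d)) : Set (Pt d))).Nonempty := by
  classical
  have hw0 : ∀ l, ∑ i, w i l = 0 := by
    intro l
    have h := congrArg (fun x => x l) hw.2.2
    simpa [esum_apply] using h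
  set v : Fin (s + 2) × Pt d → CSp d s := fun x => clone w x.2 x.1 with hv
  set T : Set (Fin (s + 2) × Pt d) := {x | x.2 ∈ P x.1} with hT
  have hPhi : Phi w P = v '' T := by
    ext y
    simp only [Phi, Set.mem_iUnion, Set.mem_image, Finset.mem_coe, hv, hT, Set.mem_setOf_eq]
    constructor
    · rintro ⟨i, p, hp, rfl⟩
      exact ⟨(i, p), hp, rfl⟩
    · rintro ⟨⟨i, p⟩, hp, rfl⟩
      exact ⟨i, p, hp, rfl⟩
  rw [hPhi, mem_affineSpan_image_iff']
  constructor
  · rintro ⟨fs, wt, hsub, hsum, heq⟩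
    set V : Fin (s + 2) → Fin (d + 1) → ℝ :=
      fun i k => ∑ x ∈ fs.filter (fun x => x.1 = i), wt x * xplus x.2 k with hV
    have hVsum : ∀ k l, ∑ i, V i k * w i l = 0 := by
      intro k l
      have h0 : (0 : ℝ) = ∑ x ∈ fs, wt x * (xplus x.2 k * w x.1 l) := by
        have h := congrArg (fun x => x (k, l)) heq
        simpa [esum_apply, esmul_apply, hv, clone] using h
      calc ∑ i, V i k * w i l
          = ∑ i, ∑ x ∈ fs.filter (fun x => x.1 = i), wt x * (xplus x.2 k * w x.1 l) := by
            apply Finset.sum_congr rfl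
            intro i _
            rw [hV, Finset.sum_mul]
            apply Finset.sum_congr rfl
            intro x hx
            rw [Finset.mem_filter] at hx
            rw [hx.2]
            ring
        _ = ∑ x ∈ fs, wt x * (xplus x.2 k * w x.1 l) :=
            Finset.sum_fiberwise fs (fun x => x.1) _
        _ = 0 := h0.symm
    have hconst : ∀ k i, V i k = V 0 k := by
      intro k i
      refine isreg_const hw (v := fun i => V i k) ?_ i 0
      ext l
      have h : (∑ j, V j k • w j) l = ∑ j, V j k * w j l := by
        simp only [esum_apply, esmul_apply]
      rw [h]
      exact hVsum k l
    have hA : ∀ i, V i (Fin.last d) = ∑ x ∈ fs.filter (fun x => x.1 = i), wt x := by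
      intro i
      apply Finset.sum_congr rfl
      intro x _
      simp [xplus, Fin.snoc_last]
    have hAsum : ∑ i, V i (Fin.last d) = 1 := by
      rw [Finset.sum_congr rfl (fun i _ => hA i), Finset.sum_fiberwise fs (fun x => x.1) wt]
      exact hsum
    have hA0 : ((s : ℝ) + 2) * V 0 (Fin.last d) = 1 := by
      have hc : ∑ i, V i (Fin.last d) = ∑ _i : Fin (s + 2), V 0 (Fin.last d) :=
        Finset.sum_congr rfl (fun i _ => hconst (Fin.last d) i)
      rw [hc, Finset.sum_const, Finset.card_univ, Fintype.card_fin, nsmul_eq_mul] at hAsum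
      push_cast at hAsum
      linarith
    set q : Pt d := WithLp.toLp 2 (fun j => ((s : ℝ) + 2) * V 0 (Fin.castSucc j) : Fin d → ℝ) with hq
    refine ⟨q, Set.mem_iInter.2 fun i => ?_⟩
    rw [SetLike.mem_coe]
    have hid : ((P i : Set (Pt d))) = id '' (P i : Set (Pt d)) := by simp
    rw [hid, mem_affineSpan_image_iff']
    have hinj : Set.InjOn (Prod.snd : Fin (s + 2) × Pt d → Pt d)
        ((fs.filter (fun x => x.1 = i) : Finset (Fin (s + 2) × Pt d)) : Set (Fin (s + 2) × Pt d)) := by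
      intro x hx y hy hxy
      rw [Finset.coe_filter, Set.mem_setOf_eq] at hx hy
      exact Prod.ext (hx.2.trans hy.2.symm) hxy
    refine ⟨(fs.filter (fun x => x.1 = i)).image Prod.snd,
      fun p => ((s : ℝ) + 2) * wt (i, p), ?_, ?_, ?_⟩
    · intro p hp
      simp only [Finset.coe_image, Set.mem_image, Finset.mem_coe, Finset.mem_filter] at hp
      obtain ⟨x, ⟨hxfs, hxi⟩, rfl⟩ := hp
      have := hsub hxfs
      rw [hT, Set.mem_setOf_eq, hxi] at this
      simpa using this
    · rw [Finset.sum_image hinj]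
      have : ∀ x ∈ fs.filter (fun x => x.1 = i),
          ((s : ℝ) + 2) * wt (i, x.2) = ((s : ℝ) + 2) * wt x := by
        intro x hx
        rw [Finset.mem_filter] at hx
        rw [show ((i, x.2) : Fin (s + 2) × Pt d) = x from Prod.ext hx.2.symm rfl]
      rw [Finset.sum_congr rfl this, ← Finset.mul_sum, ← hA i, hconst (Fin.last d) i]
      exact hA0
    · ext j
      have hrhs : (∑ p ∈ (fs.filter (fun x => x.1 = i)).image Prod.snd,
          (((s : ℝ) + 2) * wt (i, p)) • id p) j
          = ∑ x ∈ fs.filter (fun x => x.1 = i), ((s : ℝ) + 2) * wt x * x.2 j := by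
        rw [esum_apply, Finset.sum_image hinj]
        apply Finset.sum_congr rfl
        intro x hx
        rw [Finset.mem_filter] at hx
        rw [show ((i, x.2) : Fin (s + 2) × Pt d) = x from Prod.ext hx.2.symm rfl]
        rfl
      rw [hrhs]
      show ((s : ℝ) + 2) * V 0 (Fin.castSucc j) = _
      rw [(hconst (Fin.castSucc j) i).symm]
      simp only [hV, Finset.mul_sum]
      apply Finset.sum_congr rfl
      intro x _
      simp only [xplus, Fin.snoc_castSucc]
      ring
  · rintro ⟨q, hq⟩
    have hqi : ∀ i, q ∈ affineSpan ℝ ((P i : Set (Pt d))) := fun i => Set.mem_iInter.mp hq i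
    have hrep : ∀ i, ∃ (fs : Finset (Pt d)) (a : Pt d → ℝ),
        ↑fs ⊆ (P i : Set (Pt d)) ∧ ∑ p ∈ fs, a p = 1 ∧ q = ∑ p ∈ fs, a p • p := by
      intro i
      have h := hqi i
      rw [show ((P i : Set (Pt d))) = id '' (P i : Set (Pt d)) by simp,
        mem_affineSpan_image_iff'] at h
      obtain ⟨fs, a, h1, h2, h3⟩ := h
      exact ⟨fs, a, by simpa using h1, h2, by simpa using h3⟩
    choose F a hsubA hsumA hqA using hrep
    have hne : ((s : ℝ) + 2) ≠ 0 := by positivity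
    have hdisj : (↑(Finset.univ : Finset (Fin (s + 2))) : Set (Fin (s + 2))).PairwiseDisjoint
        (fun i => (F i).image (fun p => (i, p))) := by
      intro i _ j _ hij
      refine Finset.disjoint_left.mpr ?_
      intro x hx hx'
      simp only [Finset.mem_image] at hx hx'
      obtain ⟨p, hp, rfl⟩ := hx
      obtain ⟨p', hp', hx'⟩ := hx'
      exact hij (congrArg Prod.fst hx').symm
    refine ⟨Finset.univ.biUnion (fun i => (F i).image (fun p => (i, p))),
      fun x => a x.1 x.2 / ((s : ℝ) + 2), ?_, ?_, ?_⟩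
    · intro x hx
      rw [Finset.mem_coe, Finset.mem_biUnion] at hx
      obtain ⟨i, -, hx⟩ := hx
      rw [Finset.mem_image] at hx
      obtain ⟨p, hp, rfl⟩ := hx
      rw [hT, Set.mem_setOf_eq]
      exact Finset.mem_coe.mp (hsubA i (Finset.mem_coe.mpr hp))
    · rw [Finset.sum_biUnion hdisj]
      have hone : ∀ i : Fin (s + 2),
          ∑ x ∈ (F i).image (fun p => (i, p)), a x.1 x.2 / ((s : ℝ) + 2)
            = 1 / ((s : ℝ) + 2) := by
        intro i
        rw [Finset.sum_image (fun p _ p' _ h => (Prod.ext_iff.mp h).2)]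
        rw [← Finset.sum_div, hsumA i]
      rw [Finset.sum_congr rfl (fun i _ => hone i), Finset.sum_const, Finset.card_univ,
        Fintype.card_fin, nsmul_eq_mul]
      push_cast
      field_simp
    · have hinner : ∀ (i : Fin (s + 2)) (k : Fin (d + 1)),
          ∑ p ∈ F i, a i p * xplus p k = xplus q k := by
        intro i k
        induction k using Fin.lastCases with
        | last => simpa [xplus] using hsumA i
        | cast j => simpa [xplus, esum_apply, esmul_apply] using (congrArg (fun x => x j) (hqA i)).symm
      ext kl
      obtain ⟨k, l⟩ := kl
      refine Eq.symm ?_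
      calc (∑ x ∈ Finset.univ.biUnion (fun i => (F i).image (fun p => (i, p))),
              (a x.1 x.2 / ((s : ℝ) + 2)) • v x) (k, l)
          = ∑ i, (∑ p ∈ F i, a i p * xplus p k) * w i l / ((s : ℝ) + 2) := by
            rw [esum_apply, Finset.sum_biUnion hdisj]
            apply Finset.sum_congr rfl
            intro i _
            rw [Finset.sum_image (fun p _ p' _ h => (Prod.ext_iff.mp h).2), Finset.sum_mul,
              Finset.sum_div]
            apply Finset.sum_congr rfl
            intro p _
            show a i p / ((s : ℝ) + 2) * (xplus p k * w i l) = _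
            ring
        _ = ∑ i : Fin (s + 2), xplus q k * w i l / ((s : ℝ) + 2) := by
            exact Finset.sum_congr rfl (fun i _ => by rw [hinner i k])
        _ = xplus q k * (∑ i, w i l) / ((s : ℝ) + 2) := by
            rw [← Finset.sum_div, ← Finset.mul_sum]
        _ = (0 : CSp d s) (k, l) := by
            rw [hw0 l]
            simp
end

section
/- Let 𝒫 = (P_1, …, P_r) be an r-partition in ℝ^d. Then the set Φ(𝒫) is affinely dependent if and only if at least one of the sets P_i is affinely dependent or 𝒫 has a Tverberg direction, i.e., ⋂_{i=1}^r linaff(P_i) ≠ {0}. -/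
open Finset

open BMZ

section AuxBMZ

lemma bmz_simplex_rel {s : ℕ} {w : Fin (s + 2) → EuclideanSpace ℝ (Fin (s + 1))}
    (hw : IsRegularSimplex w) (c : Fin (s + 2) → ℝ) :
    ∑ i, c i • w i = 0 ↔ ∀ i j, c i = c j := by
  obtain ⟨hind, -, hsum⟩ := hw
  constructor
  · intro h i j
    set m : ℝ := (∑ i, c i) / (s + 2) with hm
    have hs2 : ((s : ℝ) + 2) ≠ 0 := by positivity
    have hsum' : ∑ i, (c i - m) = 0 := by
      rw [Finset.sum_sub_distrib, Finset.sum_const, Finset.card_univ]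
      simp only [Fintype.card_fin, hm, nsmul_eq_mul]
      push_cast
      field_simp
      ring
    have hcomb : ∑ i, (c i - m) • w i = 0 := by
      simp only [sub_smul, Finset.sum_sub_distrib, h, ← Finset.smul_sum, hsum,
        smul_zero, sub_zero]
    have hz := affineIndependent_iff.mp hind Finset.univ _ hsum' hcomb
    have hi := hz i (mem_univ i)
    have hj := hz j (mem_univ j)
    have : c i = m := by linarith [sub_eq_zero.mp hi]
    have : c j = m := by linarith [sub_eq_zero.mp hj]
    linarith
  · intro h
    have h0 : ∀ i, c i = c 0 := fun i => h i 0
    calc ∑ i, c i • w i = ∑ i, c 0 • w i := by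
          exact Finset.sum_congr rfl fun i _ => by rw [h0 i]
      _ = c 0 • ∑ i, w i := by rw [Finset.smul_sum]
      _ = 0 := by rw [hsum, smul_zero]

end AuxBMZ

section Aux2
variable {d s : ℕ} {w : Fin (s + 2) → EuclideanSpace ℝ (Fin (s + 1))}

lemma bmz_w_ne_zero (hw : IsRegularSimplex w) (i : Fin (s + 2)) : w i ≠ 0 := by
  intro h0
  have hrel : ∑ j, (if j = i then (1 : ℝ) else 0) • w j = 0 := by
    simp [ite_smul, h0]
  have hc := (bmz_simplex_rel hw _).mp hrel
  obtain ⟨j, hj⟩ := exists_ne i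
  have := hc i j
  simp [hj] at this

lemma bmz_w_inj (hw : IsRegularSimplex w) : Function.Injective w := by
  intro i j hij
  by_contra hne
  obtain ⟨-, ⟨e, he, hdist⟩, -⟩ := hw
  have := hdist i j hne
  rw [hij, dist_self] at this
  exact absurd this.symm (ne_of_gt he)

/-- The map from the disjoint union of the parts to the clones. -/
def bmzG (w : Fin (s + 2) → EuclideanSpace ℝ (Fin (s + 1)))
    (P : Fin (s + 2) → Finset (Pt d)) :
    (Σ i : Fin (s + 2), ((P i : Set (Pt d)) : Type _)) → CSp d s :=
  fun x => clone w (x.2 : Pt d) x.1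

lemma bmzG_inj (hw : IsRegularSimplex w) (P : Fin (s + 2) → Finset (Pt d)) :
    Function.Injective (bmzG w P) := by
  rintro ⟨i, p⟩ ⟨j, q⟩ hpq
  have happ : ∀ kl : Fin (d + 1) × Fin (s + 1),
      xplus (p : Pt d) kl.1 * w i kl.2 = xplus (q : Pt d) kl.1 * w j kl.2 :=
    fun kl => congrFun (congrArg WithLp.ofLp hpq) kl
  have hwij : w i = w j := by
    ext l
    have := happ (Fin.last d, l)
    simpa [xplus, Fin.snoc_last] using this
  obtain rfl : i = j := bmz_w_inj hw hwij
  obtain ⟨l0, hl0⟩ : ∃ l0, w i l0 ≠ 0 := by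
    by_contra h
    push_neg at h
    exact bmz_w_ne_zero hw i (by ext l; simpa using h l)
  have hpq2 : (p : Pt d) = (q : Pt d) := by
    ext k
    have := happ (Fin.castSucc k, l0)
    rw [hwij] at this
    simp only [xplus, Fin.snoc_castSucc] at this
    exact mul_right_cancel₀ hl0 this
  simp [Subtype.ext hpq2]

lemma bmz_range_G (w : Fin (s + 2) → EuclideanSpace ℝ (Fin (s + 1)))
    (P : Fin (s + 2) → Finset (Pt d)) :
    Phi w P = Set.range (bmzG w P) := by
  ext y
  simp only [Phi, Set.mem_iUnion, Set.mem_image, Set.mem_range]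
  constructor
  · rintro ⟨i, p, hp, rfl⟩
    exact ⟨⟨i, ⟨p, hp⟩⟩, rfl⟩
  · rintro ⟨⟨i, p⟩, rfl⟩
    exact ⟨i, p, p.2, rfl⟩

lemma bmz_mem_vectorSpan_iff (Q : Finset (Pt d)) (u : Pt d) :
    u ∈ vectorSpan ℝ (Q : Set (Pt d)) ↔
      ∃ γ : ((Q : Set (Pt d)) : Type _) → ℝ,
        (∑ p, γ p = 0) ∧ ∑ p, γ p • (p : Pt d) = u := by
  classical
  have hbase := mem_vectorSpan_iff_eq_weightedVSub (k := ℝ) (v := u)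
    (p := ((↑) : ((Q : Set (Pt d)) : Type _) → Pt d))
  rw [Subtype.range_coe] at hbase
  rw [hbase]
  constructor
  · rintro ⟨t, γ, h0, hu⟩
    refine ⟨fun p => if p ∈ t then γ p else 0, ?_, ?_⟩
    · rw [Finset.sum_ite_mem, Finset.univ_inter]; exact h0
    · rw [hu, Finset.weightedVSub_eq_linear_combination _ h0]
      simp only [ite_smul, zero_smul]
      rw [Finset.sum_ite_mem, Finset.univ_inter]
  · rintro ⟨γ, h0, hu⟩
    exact ⟨Finset.univ, γ, h0, by
      rw [Finset.weightedVSub_eq_linear_combination _ h0, hu]⟩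

end Aux2

section Aux3
variable {d s : ℕ} {w : Fin (s + 2) → EuclideanSpace ℝ (Fin (s + 1))}

lemma bmz_sum_sigma {P : Fin (s + 2) → Finset (Pt d)}
    (g : (Σ i : Fin (s + 2), ((P i : Set (Pt d)) : Type _)) → ℝ) :
    ∑ x, g x = ∑ i, ∑ p : ((P i : Set (Pt d)) : Type _), g ⟨i, p⟩ := by
  classical
  rw [← Finset.univ_sigma_univ, Finset.sum_sigma]

lemma bmz_clone_sum (P : Fin (s + 2) → Finset (Pt d))
    (β : (Σ i : Fin (s + 2), ((P i : Set (Pt d)) : Type _)) → ℝ) :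
    (∑ x, β x • bmzG w P x = 0) ↔
      ∀ k : Fin (d + 1),
        ∑ i, (∑ p : ((P i : Set (Pt d)) : Type _), β ⟨i, p⟩ * xplus (p : Pt d) k) • w i
          = 0 := by
  classical
  have happ : ∀ kl : Fin (d + 1) × Fin (s + 1),
      (∑ x, β x • bmzG w P x) kl
        = ∑ i, (∑ p : ((P i : Set (Pt d)) : Type _), β ⟨i, p⟩ * xplus (p : Pt d) kl.1)
            * w i kl.2 := by
    intro kl
    have h1 : (∑ x, β x • bmzG w P x) kl = ∑ x, β x * bmzG w P x kl := by
      rw [WithLp.ofLp_sum, Finset.sum_apply kl Finset.univ]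
      exact Finset.sum_congr rfl fun x _ => rfl
    rw [h1, bmz_sum_sigma]
    refine Finset.sum_congr rfl fun i _ => ?_
    rw [Finset.sum_mul]
    exact Finset.sum_congr rfl fun p _ => by
      show β ⟨i, p⟩ * (xplus (p : Pt d) kl.1 * w i kl.2) = _
      ring
  constructor
  · intro h k
    ext l
    have h2 : (∑ i, (∑ p : ((P i : Set (Pt d)) : Type _),
        β ⟨i, p⟩ * xplus (p : Pt d) k) • w i) l
        = ∑ i, (∑ p : ((P i : Set (Pt d)) : Type _), β ⟨i, p⟩ * xplus (p : Pt d) k)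
            * w i l := by
      rw [WithLp.ofLp_sum, Finset.sum_apply l Finset.univ]
      exact Finset.sum_congr rfl fun i _ => rfl
    rw [h2]
    have := congrFun (congrArg WithLp.ofLp h) (k, l)
    rw [happ (k, l)] at this
    simpa using this
  · intro h
    ext kl
    rw [happ kl]
    have := congrFun (congrArg WithLp.ofLp (h kl.1)) kl.2
    have h2 : (∑ i, (∑ p : ((P i : Set (Pt d)) : Type _),
        β ⟨i, p⟩ * xplus (p : Pt d) kl.1) • w i) kl.2
        = ∑ i, (∑ p : ((P i : Set (Pt d)) : Type _), β ⟨i, p⟩ * xplus (p : Pt d) kl.1)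
            * w i kl.2 := by
      rw [WithLp.ofLp_sum, Finset.sum_apply kl.2 Finset.univ]
      exact Finset.sum_congr rfl fun i _ => rfl
    rw [h2] at this
    simpa using this

end Aux3

open BMZ in
/-- Let `𝒫 = (P_1, …, P_r)` be an `r`-partition in `ℝ^d` (here `r = s+2 ≥ 2`).
Then `Φ(𝒫)` is affinely dependent iff at least one of the `P_i` is affinely
dependent or `𝒫` has a Tverberg direction, i.e. `⋂_i linaff(P_i) ≠ {0}`
(`linaff = vectorSpan` is the translate of the affine hull through `0`). -/
theorem phi_affine_dependent_iff (d s : ℕ) (hd : 1 ≤ d)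
    (w : Fin (s + 2) → EuclideanSpace ℝ (Fin (s + 1))) (hw : IsRegularSimplex w)
    (P : Fin (s + 2) → Finset (Pt d))
    (hP : Pairwise fun i i' => Disjoint (P i) (P i')) :
    ¬ AffineIndependent ℝ (fun x : Phi w P => (x : CSp d s)) ↔
      ((∃ i, ¬ AffineIndependent ℝ (fun x : (P i : Set (Pt d)) => (x : Pt d))) ∨
        (⋂ i, (vectorSpan ℝ (P i : Set (Pt d)) : Set (Pt d))) ≠ {0}) := by
  classical
  have hiff : AffineIndependent ℝ (fun x : Phi w P => (x : CSp d s)) ↔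
      AffineIndependent ℝ (bmzG w P) := by
    rw [bmz_range_G w P]
    constructor
    · intro h
      have he : Function.Injective (Set.rangeFactorization (bmzG w P)) := fun a b hab =>
        bmzG_inj hw P (congrArg Subtype.val hab)
      exact h.comp_embedding ⟨Set.rangeFactorization (bmzG w P), he⟩
    · intro h; exact h.range
  rw [hiff, affineIndependent_iff_of_fintype]
  push_neg
  constructor
  · rintro ⟨β, h0, hc, x0, hx0⟩
    rw [Finset.weightedVSub_eq_linear_combination _ h0] at hc
    rw [bmz_clone_sum P β] at hc
    set vv : Fin (s + 2) → Fin (d + 1) → ℝ :=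
      fun i k => ∑ p : ((P i : Set (Pt d)) : Type _), β ⟨i, p⟩ * xplus (p : Pt d) k with hvv
    have hveq : ∀ k i j, vv i k = vv j k := fun k =>
      (bmz_simplex_rel hw (fun i => vv i k)).mp (hc k)
    have hvlast : ∀ i, vv i (Fin.last d) = ∑ p : ((P i : Set (Pt d)) : Type _), β ⟨i, p⟩ :=
      fun i => Finset.sum_congr rfl fun p _ => by simp [xplus, Fin.snoc_last]
    have hsum_split : ∑ i, vv i (Fin.last d) = 0 := by
      rw [bmz_sum_sigma β] at h0
      rw [← h0]
      exact Finset.sum_congr rfl fun i _ => hvlast i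
    have hlast : ∀ i, vv i (Fin.last d) = 0 := by
      intro i
      have hcard : ∑ j, vv j (Fin.last d) = ((s : ℝ) + 2) * vv i (Fin.last d) := by
        rw [Finset.sum_congr rfl fun j _ => hveq (Fin.last d) j i, Finset.sum_const,
          Finset.card_univ, Fintype.card_fin, nsmul_eq_mul]
        push_cast
        ring
      have hs2 : ((s : ℝ) + 2) ≠ 0 := by positivity
      have := hsum_split
      rw [hcard] at this
      exact (mul_eq_zero.mp this).resolve_left hs2
    have hsum_i : ∀ i, ∑ p : ((P i : Set (Pt d)) : Type _), β ⟨i, p⟩ = 0 :=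
      fun i => by rw [← hvlast i]; exact hlast i
    set u : Pt d := WithLp.toLp 2 (fun k => vv 0 (Fin.castSucc k) : Fin d → ℝ) with hu_def
    have hurep : ∀ i, ∑ p : ((P i : Set (Pt d)) : Type _), β ⟨i, p⟩ • (p : Pt d) = u := by
      intro i
      ext k
      have h2 : (∑ p : ((P i : Set (Pt d)) : Type _), β ⟨i, p⟩ • (p : Pt d)) k
          = ∑ p : ((P i : Set (Pt d)) : Type _), β ⟨i, p⟩ * (p : Pt d) k := by
        rw [WithLp.ofLp_sum, Finset.sum_apply k Finset.univ]
        exact Finset.sum_congr rfl fun p _ => rfl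
      rw [h2]
      have h3 : vv i (Fin.castSucc k)
          = ∑ p : ((P i : Set (Pt d)) : Type _), β ⟨i, p⟩ * (p : Pt d) k :=
        Finset.sum_congr rfl fun p _ => by simp [xplus, Fin.snoc_castSucc]
      rw [← h3, hveq (Fin.castSucc k) i 0]
    by_cases hu : u = 0
    · left
      refine ⟨x0.1, fun hA => hx0 ?_⟩
      have := affineIndependent_iff.mp hA Finset.univ (fun p => β ⟨x0.1, p⟩)
        (hsum_i x0.1) (by rw [hurep x0.1]; exact hu) x0.2 (Finset.mem_univ _)
      exact this
    · right
      intro hset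
      have humem : u ∈ ⋂ i, (vectorSpan ℝ (P i : Set (Pt d)) : Set (Pt d)) :=
        Set.mem_iInter.2 fun i =>
          (bmz_mem_vectorSpan_iff (P i) u).mpr ⟨fun p => β ⟨i, p⟩, hsum_i i, hurep i⟩
      rw [hset] at humem
      exact hu humem
  · rintro (⟨i, hi⟩ | hT)
    · rw [affineIndependent_iff_of_fintype] at hi
      push_neg at hi
      obtain ⟨γ, hγ0, hγc, p0, hp0⟩ := hi
      rw [Finset.weightedVSub_eq_linear_combination _ hγ0] at hγc
      obtain ⟨β, hβdef⟩ : ∃ β : (Σ j : Fin (s + 2), ((P j : Set (Pt d)) : Type _)) → ℝ,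
          β = fun x => if hx : x.1 = i then γ ⟨(x.2 : Pt d), hx ▸ x.2.2⟩ else 0 := ⟨_, rfl⟩
      have hβ0 : ∑ x, β x = 0 := by
        rw [bmz_sum_sigma, Finset.sum_eq_single i]
        · rw [← hγ0]
          exact Finset.sum_congr rfl fun p _ => by simp [hβdef]
        · intro j _ hji
          exact Finset.sum_eq_zero fun p _ => by simp [hβdef, hji]
        · simp
      refine ⟨β, hβ0, ?_, ?_⟩
      · rw [Finset.weightedVSub_eq_linear_combination _ hβ0, bmz_clone_sum]
        intro k
        refine Finset.sum_eq_zero fun j _ => ?_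
        refine smul_eq_zero_of_left ?_ _
        by_cases hji : j = i
        · subst hji
          have hsimp : (∑ p : ((P j : Set (Pt d)) : Type _), β ⟨j, p⟩ * xplus (p : Pt d) k)
              = ∑ p : ((P j : Set (Pt d)) : Type _), γ p * xplus (p : Pt d) k :=
            Finset.sum_congr rfl fun p _ => by simp [hβdef]
          rw [hsimp]
          induction k using Fin.lastCases with
          | last =>
            rw [← hγ0]
            exact Finset.sum_congr rfl fun p _ => by simp [xplus, Fin.snoc_last]
          | cast k' =>
            have h4 : (∑ p : ((P j : Set (Pt d)) : Type _), γ p • (p : Pt d)) k'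
                = ∑ p : ((P j : Set (Pt d)) : Type _), γ p * (p : Pt d) k' := by
              rw [WithLp.ofLp_sum, Finset.sum_apply k' Finset.univ]
              exact Finset.sum_congr rfl fun p _ => rfl
            have h5 := congrFun (congrArg WithLp.ofLp hγc) k'
            rw [h4] at h5
            calc ∑ p : ((P j : Set (Pt d)) : Type _), γ p * xplus (p : Pt d) (Fin.castSucc k')
                = ∑ p : ((P j : Set (Pt d)) : Type _), γ p * (p : Pt d) k' :=
                  Finset.sum_congr rfl fun p _ => by simp [xplus, Fin.snoc_castSucc]
              _ = 0 := by rw [h5]; rfl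
        · exact Finset.sum_eq_zero fun p _ => by simp [hβdef, hji]
      · refine ⟨⟨i, p0⟩, ?_⟩
        rw [hβdef]
        simpa using hp0
    · have h0mem : (0 : Pt d) ∈ ⋂ i, (vectorSpan ℝ (P i : Set (Pt d)) : Set (Pt d)) :=
        Set.mem_iInter.2 fun i => Submodule.zero_mem _
      obtain ⟨u, humem, hu0⟩ : ∃ u ∈ ⋂ i, (vectorSpan ℝ (P i : Set (Pt d)) : Set (Pt d)),
          u ≠ 0 := by
        by_contra hcon
        push_neg at hcon
        exact hT (Set.eq_singleton_iff_unique_mem.mpr ⟨h0mem, fun x hx => hcon x hx⟩)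
      have hrep : ∀ i, ∃ γ : ((P i : Set (Pt d)) : Type _) → ℝ,
          (∑ p, γ p = 0) ∧ ∑ p, γ p • (p : Pt d) = u := fun i =>
        (bmz_mem_vectorSpan_iff (P i) u).mp (Set.mem_iInter.1 humem i)
      choose γ hγ0 hγu using hrep
      have hβ0 : ∑ x : (Σ j : Fin (s + 2), ((P j : Set (Pt d)) : Type _)), γ x.1 x.2 = 0 := by
        rw [bmz_sum_sigma]
        exact Finset.sum_eq_zero fun i _ => hγ0 i
      refine ⟨fun x => γ x.1 x.2, hβ0, ?_, ?_⟩
      · rw [Finset.weightedVSub_eq_linear_combination _ hβ0, bmz_clone_sum]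
        intro k
        set uz : Fin (d + 1) → ℝ := Fin.snoc (fun k : Fin d => u k) (0 : ℝ) with huz
        have hvv : ∀ i : Fin (s + 2),
            (∑ p : ((P i : Set (Pt d)) : Type _), γ i p * xplus (p : Pt d) k)
              = uz k := by
          intro i
          induction k using Fin.lastCases with
          | last =>
            rw [huz, Fin.snoc_last, ← hγ0 i]
            exact Finset.sum_congr rfl fun p _ => by simp [xplus, Fin.snoc_last]
          | cast k' =>
            rw [huz, Fin.snoc_castSucc]
            have h4 : (∑ p : ((P i : Set (Pt d)) : Type _), γ i p • (p : Pt d)) k'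
                = ∑ p : ((P i : Set (Pt d)) : Type _), γ i p * (p : Pt d) k' := by
              rw [WithLp.ofLp_sum, Finset.sum_apply k' Finset.univ]
              exact Finset.sum_congr rfl fun p _ => rfl
            rw [← congrFun (congrArg WithLp.ofLp (hγu i)) k', h4]
            exact Finset.sum_congr rfl fun p _ => by simp [xplus, Fin.snoc_castSucc]
        calc ∑ i, (∑ p : ((P i : Set (Pt d)) : Type _), γ i p * xplus (p : Pt d) k) • w i
            = ∑ i, uz k • w i :=
              Finset.sum_congr rfl fun i _ => by rw [hvv i]
          _ = uz k • ∑ i, w i := (Finset.smul_sum).symm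
          _ = 0 := by rw [hw.2.2, smul_zero]
      · by_contra hall
        push_neg at hall
        refine hu0 ?_
        rw [← hγu 0]
        exact Finset.sum_eq_zero fun p _ => by rw [hall ⟨0, p⟩, zero_smul]
end

section
/- (Orientable pseudomanifold property) Let 𝒞 be a BMZ-collection, let ℛ ∈ 𝔅(𝒞) and let a ∈ C \ {z}. Then there is exactly one ℛ′ ∈ 𝔅(𝒞) distinct from ℛ such that every point of C \ {z, a} lies in the same class in ℛ′ as in ℛ (so that the simplices F_ℛ and F_{ℛ′} share the ridge conv(Φ(ℛ−z−a))), and moreover csgn(ℛ′) = −csgn(ℛ). -/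
open Finset

section PseudoAux

open BMZ

variable {d s : ℕ}

private lemma nat_div_aux (s k m : ℕ) (hm : m < s + 1) : (k * (s + 1) + m) / (s + 1) = k := by
  rw [Nat.add_comm, Nat.add_mul_div_right _ _ (Nat.succ_pos s), Nat.div_eq_of_lt hm,
    Nat.zero_add]

private lemma nat_mod_aux (s k m : ℕ) (hm : m < s + 1) : (k * (s + 1) + m) % (s + 1) = m := by
  rw [Nat.add_comm, Nat.add_mul_mod_self_right, Nat.mod_eq_of_lt hm]

/-- The index of the `m`-th point of the `k`-th color class. -/
private def jOf (d s : ℕ) (k : Fin (d + 1)) (m : Fin (s + 1)) : Fin (NN d s) :=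
  ⟨(k : ℕ) * (s + 1) + (m : ℕ), by
    have hk : (k : ℕ) + 1 ≤ d + 1 := k.isLt
    have hm : (m : ℕ) < s + 1 := m.isLt
    calc (k : ℕ) * (s + 1) + (m : ℕ) < (k : ℕ) * (s + 1) + (s + 1) := by omega
      _ = ((k : ℕ) + 1) * (s + 1) := by ring
      _ ≤ (d + 1) * (s + 1) := Nat.mul_le_mul_right _ hk⟩

private def kOf (d s : ℕ) (a : Fin (NN d s)) : Fin (d + 1) :=
  ⟨(a : ℕ) / (s + 1), Nat.div_lt_of_lt_mul (by rw [Nat.mul_comm]; exact a.isLt)⟩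

private def mOf (d s : ℕ) (a : Fin (NN d s)) : Fin (s + 1) :=
  ⟨(a : ℕ) % (s + 1), Nat.mod_lt _ (Nat.succ_pos s)⟩

private lemma jOf_kOf_mOf (a : Fin (NN d s)) : jOf d s (kOf d s a) (mOf d s a) = a := by
  apply Fin.ext
  show (a : ℕ) / (s + 1) * (s + 1) + (a : ℕ) % (s + 1) = a
  conv_rhs => rw [← Nat.div_add_mod (a : ℕ) (s + 1)]
  ring

private lemma kOf_jOf (k : Fin (d + 1)) (m : Fin (s + 1)) : kOf d s (jOf d s k m) = k :=
  Fin.ext (nat_div_aux s k m m.isLt)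

private lemma mOf_jOf (k : Fin (d + 1)) (m : Fin (s + 1)) : mOf d s (jOf d s k m) = m :=
  Fin.ext (nat_mod_aux s k m m.isLt)

private lemma jOf_eq_iff (k : Fin (d + 1)) (m : Fin (s + 1)) (a : Fin (NN d s)) :
    jOf d s k m = a ↔ k = kOf d s a ∧ m = mOf d s a := by
  constructor
  · rintro rfl
    exact ⟨(kOf_jOf k m).symm, (mOf_jOf k m).symm⟩
  · rintro ⟨rfl, rfl⟩
    exact jOf_kOf_mOf a

private lemma classOf_jOf (σ : PartEnc d s) (k : Fin (d + 1)) (m : Fin (s + 1)) :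
    classOf σ (Fin.castSucc (jOf d s k m)) = σ k (Fin.castSucc m) := by
  have hlt : ((Fin.castSucc (jOf d s k m) : Fin (NN d s + 1)) : ℕ) < NN d s := by
    simpa using (jOf d s k m).isLt
  rw [classOf, dif_pos hlt]
  have hval : ((Fin.castSucc (jOf d s k m) : Fin (NN d s + 1)) : ℕ)
      = (k : ℕ) * (s + 1) + (m : ℕ) := rfl
  have hdiv : ((Fin.castSucc (jOf d s k m) : Fin (NN d s + 1)) : ℕ) / (s + 1) = (k : ℕ) := by
    rw [hval]; exact nat_div_aux s k m m.isLt
  have hmod : ((Fin.castSucc (jOf d s k m) : Fin (NN d s + 1)) : ℕ) % (s + 1) = (m : ℕ) := by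
    rw [hval]; exact nat_mod_aux s k m m.isLt
  have h1 : (⟨((Fin.castSucc (jOf d s k m) : Fin (NN d s + 1)) : ℕ) / (s + 1),
      Nat.div_lt_of_lt_mul (by rw [Nat.mul_comm]; exact hlt)⟩ : Fin (d + 1)) = k :=
    Fin.ext hdiv
  have h2 : (⟨((Fin.castSucc (jOf d s k m) : Fin (NN d s + 1)) : ℕ) % (s + 1),
      Nat.mod_lt _ (Nat.succ_pos s)⟩ : Fin (s + 1)) = m :=
    Fin.ext hmod
  rw [h1, h2]

/-- Two permutations agreeing off a single point agree everywhere. -/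
private lemma perm_eq_of_eq_off {α : Type*} (f g : Equiv.Perm α) (x : α)
    (h : ∀ y, y ≠ x → f y = g y) : f = g := by
  have hx : f x = g x := by
    by_contra hne
    have hy : g⁻¹ (f x) ≠ x := by
      intro he
      have h2 := congrArg g he
      rw [Equiv.Perm.inv_def, Equiv.apply_symm_apply] at h2
      exact hne h2
    have := h _ hy
    rw [Equiv.Perm.inv_def, Equiv.apply_symm_apply] at this
    exact hy (f.injective this)
  apply Equiv.ext
  intro y
  by_cases hy : y = x
  · subst hy; exact hx
  · exact h y hy

open Classical in
/-- The flipped partition `σ'₀`. -/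
private noncomputable def flipAt (σ : PartEnc d s) (a : Fin (NN d s)) : PartEnc d s :=
  Function.update σ (kOf d s a)
    (σ (kOf d s a) * Equiv.swap (Fin.castSucc (mOf d s a)) (Fin.last (s + 1)))

private lemma castSucc_ne_last (m : Fin (s + 1)) :
    Fin.castSucc m ≠ Fin.last (s + 1) :=
  Fin.ne_of_lt (Fin.castSucc_lt_last m)

private lemma flipAt_ne (σ : PartEnc d s) (a : Fin (NN d s)) : flipAt σ a ≠ σ := by
  classical
  intro h
  have h0 : flipAt σ a (kOf d s a) = σ (kOf d s a) := by rw [h]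
  rw [flipAt, Function.update_self] at h0
  have h1 : (σ (kOf d s a) * Equiv.swap (Fin.castSucc (mOf d s a)) (Fin.last (s + 1)))
      (Fin.castSucc (mOf d s a)) = σ (kOf d s a) (Fin.castSucc (mOf d s a)) := by rw [h0]
  simp only [Equiv.Perm.mul_apply, Equiv.swap_apply_left] at h1
  exact castSucc_ne_last (mOf d s a) ((σ (kOf d s a)).injective h1.symm)

private lemma flipAt_agrees (σ : PartEnc d s) (a : Fin (NN d s)) :
    ∀ j : Fin (NN d s), j ≠ a →
      classOf (flipAt σ a) j.castSucc = classOf σ j.castSucc := by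
  classical
  intro j hj
  have hjrep : j = jOf d s (kOf d s j) (mOf d s j) := (jOf_kOf_mOf j).symm
  rw [hjrep, classOf_jOf, classOf_jOf]
  by_cases hk : kOf d s j = kOf d s a
  · have hm : mOf d s j ≠ mOf d s a := by
      intro hm
      exact hj (by rw [hjrep, hk, hm, jOf_kOf_mOf])
    rw [flipAt, hk, Function.update_self]
    simp only [Equiv.Perm.mul_apply]
    rw [Equiv.swap_apply_of_ne_of_ne]
    · exact fun h => hm (Fin.castSucc_injective _ h)
    · exact castSucc_ne_last _
  · rw [flipAt, Function.update_of_ne hk]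

/-- Uniqueness: any other partition agreeing off `a` equals `flipAt σ a`. -/
private lemma eq_flipAt (σ σ' : PartEnc d s) (a : Fin (NN d s)) (hne : σ' ≠ σ)
    (h : ∀ j : Fin (NN d s), j ≠ a →
      classOf σ' j.castSucc = classOf σ j.castSucc) :
    σ' = flipAt σ a := by
  classical
  set k₀ := kOf d s a with hk₀
  set m₀ := mOf d s a with hm₀
  -- for `k ≠ k₀`, all points of color `k` are ≠ a
  have hother : ∀ (k : Fin (d + 1)), k ≠ k₀ → σ' k = σ k := by
    intro k hk
    apply perm_eq_of_eq_off _ _ (Fin.last (s + 1))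
    intro y hy
    obtain ⟨m, rfl⟩ := Fin.exists_castSucc_eq.mpr hy
    have hja : jOf d s k m ≠ a := by
      rw [Ne, jOf_eq_iff]
      exact fun hkm => hk hkm.1
    have := h (jOf d s k m) hja
    rwa [classOf_jOf, classOf_jOf] at this
  have hk0 : ∀ (m : Fin (s + 1)), m ≠ m₀ →
      σ' k₀ (Fin.castSucc m) = σ k₀ (Fin.castSucc m) := by
    intro m hm
    have hja : jOf d s k₀ m ≠ a := by
      rw [Ne, jOf_eq_iff]
      exact fun hkm => hm hkm.2
    have := h (jOf d s k₀ m) hja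
    rwa [classOf_jOf, classOf_jOf] at this
  have hne0 : σ' k₀ ≠ σ k₀ := by
    intro he
    apply hne
    funext k
    by_cases hk : k = k₀
    · subst hk; exact he
    · exact hother k hk
  -- value at `castSucc m₀`
  have hv1 : σ' k₀ (Fin.castSucc m₀) = σ k₀ (Fin.last (s + 1)) := by
    by_contra hv
    obtain ⟨y, hyv⟩ : ∃ y, σ k₀ y = σ' k₀ (Fin.castSucc m₀) :=
      ⟨_, (σ k₀).apply_symm_apply _⟩
    have hylast : y ≠ Fin.last (s + 1) := fun he => hv (he ▸ hyv).symm
    obtain ⟨my, rfl⟩ := Fin.exists_castSucc_eq.mpr hylast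
    by_cases hym : my = m₀
    · subst hym
      have hagree : σ' k₀ = σ k₀ := by
        apply perm_eq_of_eq_off _ _ (Fin.last (s + 1))
        intro z hz
        obtain ⟨mz, rfl⟩ := Fin.exists_castSucc_eq.mpr hz
        by_cases hmz : mz = m₀
        · subst hmz; exact hyv.symm
        · exact hk0 mz hmz
      exact hne0 hagree
    · have h' := (hk0 my hym).trans hyv
      exact hym (Fin.castSucc_injective _ ((σ' k₀).injective h'))
  -- value at `last`
  have hv2 : σ' k₀ (Fin.last (s + 1)) = σ k₀ (Fin.castSucc m₀) := by
    obtain ⟨y, hyv⟩ : ∃ y, σ' k₀ y = σ k₀ (Fin.castSucc m₀) :=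
      ⟨_, (σ' k₀).apply_symm_apply _⟩
    by_cases hylast : y = Fin.last (s + 1)
    · rw [← hylast]; exact hyv
    · exfalso
      obtain ⟨my, rfl⟩ := Fin.exists_castSucc_eq.mpr hylast
      by_cases hym : my = m₀
      · subst hym
        rw [hv1] at hyv
        exact castSucc_ne_last _ (((σ k₀).injective hyv).symm)
      · rw [hk0 my hym] at hyv
        exact hym (Fin.castSucc_injective _ ((σ k₀).injective hyv))
  funext k
  by_cases hk : k = k₀
  · subst hk
    rw [flipAt, ← hk₀, Function.update_self]
    apply Equiv.ext
    intro z
    simp only [Equiv.Perm.mul_apply]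
    by_cases hz1 : z = Fin.castSucc m₀
    · subst hz1
      rw [Equiv.swap_apply_left, hv1]
    · by_cases hz2 : z = Fin.last (s + 1)
      · subst hz2
        rw [Equiv.swap_apply_right, hv2]
      · rw [Equiv.swap_apply_of_ne_of_ne hz1 hz2]
        obtain ⟨mz, rfl⟩ := Fin.exists_castSucc_eq.mpr hz2
        exact hk0 mz fun hm => hz1 (by rw [hm])
  · rw [flipAt, ← hk₀, Function.update_of_ne hk]
    exact hother k hk

private lemma csgn_flipAt (σ : PartEnc d s) (a : Fin (NN d s)) :
    csgn (flipAt σ a) = -csgn σ := by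
  classical
  set k₀ := kOf d s a with hk₀
  have hsplit : ∀ τ : PartEnc d s,
      csgn τ = (Equiv.Perm.sign (τ k₀) : ℤ) * ∏ k ∈ Finset.univ.erase k₀,
        (Equiv.Perm.sign (τ k) : ℤ) := by
    intro τ
    rw [csgn, ← Finset.mul_prod_erase Finset.univ _ (Finset.mem_univ k₀)]
  rw [hsplit, hsplit σ]
  have h1 : ∀ k ∈ Finset.univ.erase k₀, (Equiv.Perm.sign (flipAt σ a k) : ℤ)
      = (Equiv.Perm.sign (σ k) : ℤ) := by
    intro k hk
    rw [flipAt, ← hk₀, Function.update_of_ne (Finset.ne_of_mem_erase hk)]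
  rw [Finset.prod_congr rfl h1]
  have h2 : (Equiv.Perm.sign (flipAt σ a k₀) : ℤ) = -(Equiv.Perm.sign (σ k₀) : ℤ) := by
    rw [flipAt, ← hk₀, Function.update_self, map_mul,
      Equiv.Perm.sign_swap (castSucc_ne_last (mOf d s a))]
    push_cast
    ring
  rw [h2]
  ring

end PseudoAux

open BMZ in
/-- **orientable pseudomanifold property.**
Let `𝒞` be a BMZ-collection, let `ℛ ∈ 𝔅(𝒞)` (encoded by `σ`) and let
`a ∈ C \\ {z}`. Then there is exactly one `ℛ' ∈ 𝔅(𝒞)` distinct from `ℛ` in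
which every point of `C \\ {z, a}` lies in the same class as in `ℛ`, and
moreover `csgn(ℛ') = -csgn(ℛ)`. -/
theorem pseudomanifold_property (d s : ℕ) (hd : 1 ≤ d)
    (σ : PartEnc d s) (a : Fin (NN d s)) :
    (∃! σ' : PartEnc d s, σ' ≠ σ ∧
        ∀ j : Fin (NN d s), j ≠ a →
          classOf σ' j.castSucc = classOf σ j.castSucc) ∧
    (∀ σ' : PartEnc d s, σ' ≠ σ →
        (∀ j : Fin (NN d s), j ≠ a →
          classOf σ' j.castSucc = classOf σ j.castSucc) →
        csgn σ' = -csgn σ) := by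
  constructor
  · refine ⟨flipAt σ a, ⟨flipAt_ne σ a, flipAt_agrees σ a⟩, ?_⟩
    rintro σ' ⟨hne, h⟩
    exact eq_flipAt σ σ' a hne h
  · intro σ' hne h
    rw [eq_flipAt σ σ' a hne h]
    exact csgn_flipAt σ a
end

section
/- Let 𝒞 be a BMZ-collection in sufficiently general position. If ψ and ν are generic rays for 𝒞, then deg_ψ(𝒞) = deg_ν(𝒞). -/
open Finset

section AuxiliaryLemmas

open BMZ

namespace BMZaux

/-! ### Sign function lemmas -/

lemma sgnR_of_pos {x : ℝ} (h : 0 < x) : sgnR x = 1 := if_pos h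

lemma sgnR_of_neg {x : ℝ} (h : x < 0) : sgnR x = -1 := by
  unfold sgnR
  rw [if_neg (not_lt.2 h.le), if_pos h]

lemma sgnR_zero : sgnR 0 = 0 := by
  unfold sgnR
  rw [if_neg (lt_irrefl 0), if_neg (lt_irrefl 0)]

/-- `(1 + sgn y)/2 ∈ ℚ`: a "half-indicator" of positivity. -/
noncomputable def qq (y : ℝ) : ℚ := (1 + (sgnR y : ℚ)) / 2

lemma qq_pos {y : ℝ} (h : 0 < y) : qq y = 1 := by
  rw [qq, sgnR_of_pos h]; norm_num

lemma qq_neg {y : ℝ} (h : y < 0) : qq y = 0 := by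
  rw [qq, sgnR_of_neg h]; norm_num

lemma qq_zero : qq 0 = 1 / 2 := by
  rw [qq, sgnR_zero]
  norm_num

lemma qq_mul_pos {r : ℝ} (hr : 0 < r) (y : ℝ) : qq (r * y) = qq y := by
  rcases lt_trichotomy y 0 with h | h | h
  · rw [qq_neg (mul_neg_of_pos_of_neg hr h), qq_neg h]
  · rw [h, mul_zero]
  · rw [qq_pos (mul_pos hr h), qq_pos h]

lemma qq_mul_neg {r : ℝ} (hr : r < 0) (y : ℝ) : qq (r * y) = 1 - qq y := by
  rcases lt_trichotomy y 0 with h | h | h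
  · rw [qq_pos (mul_pos_of_neg_of_neg hr h), qq_neg h]; norm_num
  · rw [h, mul_zero, qq_zero]; norm_num
  · rw [qq_neg (mul_neg_of_neg_of_pos hr h), qq_pos h]; norm_num

/-! ### Affine independence and linear independence -/

lemma linIndep_of_aff {V : Type*} [AddCommGroup V] [Module ℝ V] {n : ℕ} {v : Fin n → V}
    (ha : AffineIndependent ℝ v) (h0 : (0 : V) ∉ affineSpan ℝ (Set.range v)) :
    LinearIndependent ℝ v := by
  rw [Fintype.linearIndependent_iff]
  intro g hg
  by_cases hs : ∑ i, g i = 0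
  · exact fun i => affineIndependent_iff.1 ha Finset.univ g hs hg i (Finset.mem_univ i)
  · exfalso
    apply h0
    set S := ∑ i, g i with hS
    have hw1 : ∑ i, (fun i => g i / S) i = 1 := by
      rw [← Finset.sum_div]
      exact div_self hs
    have hmem := affineCombination_mem_affineSpan (k := ℝ) hw1 v
    rw [Finset.affineCombination_eq_linear_combination _ _ _ hw1] at hmem
    have hzero : ∑ i, (g i / S) • v i = 0 := by
      have : ∑ i, (g i / S) • v i = S⁻¹ • ∑ i, g i • v i := by
        rw [Finset.smul_sum]
        refine Finset.sum_congr rfl fun i _ => ?_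
        rw [smul_smul, div_eq_inv_mul]
      rw [this, hg, smul_zero]
    rwa [hzero] at hmem

/-! ### Cramer-type identity -/

lemma det_updateRow_basis {n : ℕ} (b : Module.Basis (Fin n) ℝ (Fin n → ℝ))
    (M : Matrix (Fin n) (Fin n) ℝ) (hM : ∀ i, M i = b i) (a : Fin n) (x : Fin n → ℝ) :
    (M.updateRow a x).det = b.repr x a * M.det := by
  have hx : x = ∑ k, b.repr x k • M k := by
    simp_rw [hM]
    exact (b.sum_repr x).symm
  conv_lhs => rw [hx]
  rw [Matrix.det_updateRow_sum]
  rw [smul_eq_mul]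

/-! ### Avoiding finitely many nonzero linear functionals on a ball -/

lemma exists_near_forall_ne {E : Type*} [NormedAddCommGroup E] [NormedSpace ℝ E]
    {κ : Type*} [DecidableEq κ] (J : Finset κ) (g : κ → (E →ₗ[ℝ] ℝ))
    (hg : ∀ j ∈ J, g j ≠ 0) (x0 : E) {ε : ℝ} (hε : 0 < ε) :
    ∃ x : E, dist x x0 < ε ∧ ∀ j ∈ J, g j x ≠ 0 := by
  classical
  induction J using Finset.induction_on with
  | empty => exact ⟨x0, by simpa using hε, by simp⟩
  | @insert j0 J hj0 ih =>
    obtain ⟨x, hx, hxJ⟩ := ih fun j hj => hg j (Finset.mem_insert_of_mem hj)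
    obtain ⟨z, hz⟩ : ∃ z, g j0 z ≠ 0 := by
      by_contra h
      push_neg at h
      exact hg j0 (Finset.mem_insert_self _ _) (LinearMap.ext fun y => h y)
    set δ := (ε - dist x x0) / (‖z‖ + 1) with hδdef
    have hδ : 0 < δ := div_pos (sub_pos.2 hx) (by positivity)
    set bad : Finset ℝ := (insert j0 J).image fun j => -(g j x) / (g j z) with hbad
    obtain ⟨t, ht⟩ : ∃ t, t ∈ Set.Ioo (0:ℝ) δ \ ↑bad :=
      ((Set.Ioo_infinite hδ).diff (bad.finite_toSet)).nonempty
    obtain ⟨⟨ht0, htδ⟩, htbad⟩ := ht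
    refine ⟨x + t • z, ?_, ?_⟩
    · have h1 : dist (x + t • z) x0 ≤ ‖t • z‖ + dist x x0 := by
        calc dist (x + t • z) x0 ≤ dist (x + t • z) x + dist x x0 := dist_triangle _ _ _
        _ = ‖t • z‖ + dist x x0 := by rw [dist_self_add_left]
      have h2 : ‖t • z‖ < ε - dist x x0 := by
        rw [norm_smul, Real.norm_eq_abs, abs_of_pos ht0]
        calc t * ‖z‖ ≤ t * (‖z‖ + 1) := by nlinarith [ht0]
        _ < δ * (‖z‖ + 1) := by
            apply mul_lt_mul_of_pos_right htδ (by positivity)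
        _ = ε - dist x x0 := by
            rw [hδdef, div_mul_cancel₀]
            positivity
      linarith
    · intro j hj heq
      have hval : g j x + t * g j z = 0 := by
        rw [map_add, map_smul, smul_eq_mul] at heq
        exact heq
      by_cases hjz : g j z = 0
      · rw [hjz, mul_zero, add_zero] at hval
        rcases Finset.mem_insert.1 hj with rfl | hjJ
        · exact hz hjz
        · exact hxJ j hjJ hval
      · apply htbad
        have hteq : t = -(g j x) / (g j z) := by
          rw [eq_div_iff hjz]
          linarith [hval]
        rw [Finset.mem_coe, hbad, Finset.mem_image]
        exact ⟨j, hj, hteq.symm⟩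

/-! ### A locally constant function on `ℝ` is constant -/

lemma const_of_locally_const (H : ℝ → ℚ) (h : ∀ t : ℝ, ∀ᶠ r in nhds t, H r = H t)
    (a b : ℝ) : H a = H b := by
  have hop : ∀ cq : ℚ, IsOpen {t : ℝ | H t = cq} := by
    intro cq
    rw [isOpen_iff_mem_nhds]
    intro t ht
    rw [Set.mem_setOf_eq] at ht
    exact (h t).mono fun r hr => by
      show H r = cq
      rw [hr]
      exact ht
  have hcl : IsClosed {t : ℝ | H t = H a} := by
    rw [← isOpen_compl_iff, isOpen_iff_mem_nhds]
    intro t ht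
    rw [Set.mem_compl_iff, Set.mem_setOf_eq] at ht
    exact (h t).mono fun r hr => by
      intro hmem
      apply ht
      have hmem' : H r = H a := hmem
      rw [← hr]
      exact hmem'
  have hclopen : IsClopen {t : ℝ | H t = H a} := ⟨hcl, hop _⟩
  rcases isClopen_iff.1 hclopen with hemp | huniv
  · exfalso
    have ha : a ∈ {t : ℝ | H t = H a} := rfl
    rw [hemp] at ha
    exact ha
  · have hb : b ∈ {t : ℝ | H t = H a} := huniv ▸ Set.mem_univ b
    exact hb.symm

end BMZaux

end AuxiliaryLemmas

section FlipLemmas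

open BMZ

namespace BMZaux

variable {d s : ℕ}

/-- The color index of the `a`-th point, `a < N`. -/
def kOf (a : Fin (NN d s)) : Fin (d + 1) :=
  ⟨(a : ℕ) / (s + 1), Nat.div_lt_of_lt_mul (by rw [Nat.mul_comm]; exact a.isLt)⟩

/-- The position of the `a`-th point within its color class. -/
def jOf {d s : ℕ} (a : Fin (NN d s)) : Fin (s + 1) :=
  ⟨(a : ℕ) % (s + 1), Nat.mod_lt _ (Nat.succ_pos s)⟩

lemma kj_eq {i a : Fin (NN d s)} (hk : kOf i = kOf a) (hj : jOf i = jOf a) : i = a := by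
  rw [Fin.ext_iff] at hk hj
  simp only [kOf, jOf] at hk hj
  have hi := Nat.div_add_mod (i : ℕ) (s + 1)
  have ha := Nat.div_add_mod (a : ℕ) (s + 1)
  apply Fin.ext
  rw [← hi, ← ha, hk, hj]

lemma classOf_castSucc (σ : PartEnc d s) (i : Fin (NN d s)) :
    classOf σ i.castSucc = σ (kOf i) ((jOf i).castSucc) := by
  have h : ((i.castSucc : Idx d s) : ℕ) < NN d s := by
    simpa using i.isLt
  rw [classOf, dif_pos h]
  rfl

lemma classOf_last (σ : PartEnc d s) :
    classOf σ (Fin.last (NN d s)) = Fin.last (s + 1) := by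
  rw [classOf, dif_neg]
  simp

/-- The partner partition: point `a` is moved to the other class missing its color. -/
def flip (σ : PartEnc d s) (a : Fin (NN d s)) : PartEnc d s :=
  Function.update σ (kOf a)
    (σ (kOf a) * Equiv.swap ((jOf a).castSucc) (Fin.last (s + 1)))

lemma flip_classOf_ne (σ : PartEnc d s) {i a : Fin (NN d s)} (h : i ≠ a) :
    classOf (flip σ a) i.castSucc = classOf σ i.castSucc := by
  rw [classOf_castSucc, classOf_castSucc]
  by_cases hk : kOf i = kOf a
  · have hj : jOf i ≠ jOf a := fun hj => h (kj_eq hk hj)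
    rw [hk, flip, Function.update_self, Equiv.Perm.mul_apply,
      Equiv.swap_apply_of_ne_of_ne (by simpa using hj) (Fin.castSucc_lt_last _).ne]
  · rw [flip, Function.update_of_ne hk]

lemma flip_flip (σ : PartEnc d s) (a : Fin (NN d s)) : flip (flip σ a) a = σ := by
  unfold flip
  rw [Function.update_self, Function.update_idem, mul_assoc, Equiv.swap_mul_self, mul_one,
    Function.update_eq_self]

lemma flip_ne (σ : PartEnc d s) (a : Fin (NN d s)) : flip σ a ≠ σ := by
  intro hEq
  have h1 := congrFun hEq (kOf a)
  rw [flip, Function.update_self] at h1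
  have h2 := congrArg (fun π : Equiv.Perm (Fin (s + 2)) => π ((jOf a).castSucc)) h1
  simp only [Equiv.Perm.mul_apply, Equiv.swap_apply_left] at h2
  have h3 := (Equiv.injective _) h2
  exact (Fin.castSucc_lt_last (jOf a)).ne h3.symm

lemma csgn_flip (σ : PartEnc d s) (a : Fin (NN d s)) : csgn (flip σ a) = - csgn σ := by
  classical
  have hfd : (fun k => ((Equiv.Perm.sign (flip σ a k) : ℤ))) =
      Function.update (fun k => ((Equiv.Perm.sign (σ k) : ℤ))) (kOf a)
        ((Equiv.Perm.sign (σ (kOf a) * Equiv.swap ((jOf a).castSucc) (Fin.last (s + 1))) : ℤ)) := by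
    funext k
    by_cases hk : k = kOf a
    · subst hk
      rw [flip, Function.update_self, Function.update_self]
    · rw [flip, Function.update_of_ne hk, Function.update_of_ne hk]
  rw [csgn, hfd, Finset.prod_update_of_mem (Finset.mem_univ _)]
  rw [Equiv.Perm.sign_mul, Equiv.Perm.sign_swap (Fin.castSucc_lt_last (jOf a)).ne,
    Units.val_mul]
  rw [csgn, ← Finset.mul_prod_erase Finset.univ
    (fun k => ((Equiv.Perm.sign (σ k) : ℤ))) (Finset.mem_univ (kOf a)), ← Finset.erase_eq]
  push_cast
  ring

lemma rows_flip {d s : ℕ} (w : Fin (s + 2) → EuclideanSpace ℝ (Fin (s + 1)))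
    (c : Idx d s → Pt d) (σ : PartEnc d s) (a : Fin (NN d s)) {i : Fin (NN d s)} (h : i ≠ a) :
    rows w c (flip σ a) i = rows w c σ i := by
  show clone w (c i.castSucc) (classOf (flip σ a) i.castSucc)
      = clone w (c i.castSucc) (classOf σ i.castSucc)
  rw [flip_classOf_ne σ h]

end BMZaux

end FlipLemmas

set_option maxHeartbeats 2000000 in
open BMZ in
/-- Let `𝒞` be a BMZ-collection in sufficiently general position. If `ψ` and `ν`
are generic rays for `𝒞` (rays emanating from `0`, with directions `u, v`),
then `deg_ψ(𝒞) = deg_ν(𝒞)`. -/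
theorem deg_independent_of_ray (d s : ℕ) (hd : 1 ≤ d)
    (w : Fin (s + 2) → EuclideanSpace ℝ (Fin (s + 1))) (hw : IsRegularSimplex w)
    (c : Idx d s → Pt d) (hc : Function.Injective c)
    (hg : SuffGenPos w c)
    (u v : CSp d s) (hu : u ≠ 0) (hv : v ≠ 0)
    (hgu : GenericRay w c u) (hgv : GenericRay w c v) :
    degRay w c u = degRay w c v := by
  classical
  obtain ⟨hgp1, hgp2⟩ := hg
  have hNpos : 0 < NN d s := Nat.mul_pos (Nat.succ_pos d) (Nat.succ_pos s)
  have hN2 : 2 ≤ NN d s := by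
    have h2 : 2 ≤ d + 1 := by omega
    calc 2 = 2 * 1 := by ring
    _ ≤ (d + 1) * (s + 1) := Nat.mul_le_mul h2 (Nat.succ_pos s)
  haveI : Nonempty (Fin (NN d s)) := ⟨⟨0, hNpos⟩⟩
  haveI : Nontrivial (Fin (NN d s)) := by
    refine ⟨⟨0, hNpos⟩, ⟨1, by omega⟩, ?_⟩
    intro hEq
    have := congrArg Fin.val hEq
    simp at this
  -- The coordinate linear equivalence `ℝ^{ι} ≃ ℝ^N`
  let L : CSp d s ≃ₗ[ℝ] (Fin (NN d s) → ℝ) :=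
    (WithLp.linearEquiv 2 ℝ ((Fin (d + 1) × Fin (s + 1)) → ℝ)).trans
      (LinearEquiv.funCongrLeft ℝ ℝ finProdFinEquiv.symm)
  have hL : ∀ (x : CSp d s) (j : Fin (NN d s)), L x j = x (finProdFinEquiv.symm j) :=
    fun x j => rfl
  have cardeq : Fintype.card (Fin (NN d s)) = Module.finrank ℝ (CSp d s) := by
    simp [finrank_euclideanSpace]
  -- `Φ(ℛ - z)` is the set of rows
  have hPhiLast : ∀ σ : PartEnc d s,
      PhiMinus w c σ (Fin.last (NN d s)) = Set.range (rows w c σ) := by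
    intro σ
    unfold PhiMinus
    ext x
    constructor
    · rintro ⟨i, hi, rfl⟩
      obtain ⟨i', rfl⟩ := Fin.exists_castSucc_eq.2 hi
      exact ⟨i', rfl⟩
    · rintro ⟨i', rfl⟩
      exact ⟨i'.castSucc, (Fin.castSucc_lt_last i').ne, rfl⟩
  -- linear independence and bases
  have li : ∀ σ : PartEnc d s, LinearIndependent ℝ (rows w c σ) := by
    intro σ
    refine BMZaux.linIndep_of_aff (hgp1 σ) ?_
    have h := hgp2 σ (Fin.last (NN d s))
    rwa [hPhiLast σ] at h
  let B : PartEnc d s → Module.Basis (Fin (NN d s)) ℝ (CSp d s) := fun σ =>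
    basisOfLinearIndependentOfCardEqFinrank (li σ) cardeq
  have Bcoe : ∀ σ, ⇑(B σ) = rows w c σ := fun σ =>
    coe_basisOfLinearIndependentOfCardEqFinrank _ _
  let co : PartEnc d s → CSp d s → Fin (NN d s) → ℝ := fun σ x i => (B σ).repr x i
  have sum_co : ∀ σ (x : CSp d s), ∑ i, co σ x i • rows w c σ i = x := by
    intro σ x
    have h := (B σ).sum_repr x
    simp only [Bcoe] at h
    exact h
  have repr_eq : ∀ σ (cf : Fin (NN d s) → ℝ),
      co σ (∑ i, cf i • rows w c σ i) = cf := by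
    intro σ cf
    have h1 : (∑ i, cf i • rows w c σ i) = ∑ i, cf i • (B σ) i := by
      simp only [Bcoe]
    funext j
    show ((B σ).repr (∑ i, cf i • rows w c σ i)) j = cf j
    rw [h1, (B σ).repr_sum_self]
  -- matrices and determinants
  let MA : PartEnc d s → Matrix (Fin (NN d s)) (Fin (NN d s)) ℝ := fun σ =>
    Matrix.of fun i j => rows w c σ i (finProdFinEquiv.symm j)
  let D : PartEnc d s → ℝ := fun σ => (MA σ).det
  have gsgn_eq : ∀ σ, gsgn w c σ = sgnR (D σ) := fun σ => rfl
  have MArow : ∀ σ i, MA σ i = L (rows w c σ i) := fun σ i => rfl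
  have Dne : ∀ σ, D σ ≠ 0 := by
    intro σ
    have h1 : LinearIndependent ℝ (fun i => MA σ i) :=
      (li σ).map' (L : CSp d s →ₗ[ℝ] (Fin (NN d s) → ℝ)) L.ker
    have h2 : IsUnit (MA σ) := Matrix.linearIndependent_rows_iff_isUnit.1 h1
    exact isUnit_iff_ne_zero.1 ((Matrix.isUnit_iff_isUnit_det _).1 h2)
  -- Cramer's rule
  have cram : ∀ σ (a : Fin (NN d s)) (x : CSp d s),
      ((MA σ).updateRow a (L x)).det = co σ x a * D σ := by
    intro σ a x
    have h := BMZaux.det_updateRow_basis ((B σ).map L) (MA σ)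
      (fun i => by rw [MArow, Module.Basis.map_apply, Bcoe]) a (L x)
    rw [h]
    congr 1
    show (((B σ).map L).repr (L x)) a = ((B σ).repr x) a
    rw [Module.Basis.map_repr]
    simp
  -- relations between σ and flip σ a
  have cram' : ∀ σ (a : Fin (NN d s)) (x : CSp d s),
      co (BMZaux.flip σ a) x a * D (BMZaux.flip σ a) = co σ x a * D σ := by
    intro σ a x
    rw [← cram, ← cram]
    congr 1
    apply Matrix.ext
    intro i j
    by_cases hi : i = a
    · subst hi
      rw [Matrix.updateRow_self, Matrix.updateRow_self]
    · rw [Matrix.updateRow_ne hi, Matrix.updateRow_ne hi, MArow, MArow,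
        BMZaux.rows_flip w c σ a hi]
  have onwall : ∀ σ (a : Fin (NN d s)) (x : CSp d s), co σ x a = 0 →
      ∀ i, i ≠ a → co (BMZaux.flip σ a) x i = co σ x i := by
    intro σ a x h0 i hi
    have hx : ∑ k, co σ x k • rows w c (BMZaux.flip σ a) k = x := by
      conv_rhs => rw [← sum_co σ x]
      refine Finset.sum_congr rfl fun k _ => ?_
      by_cases hk : k = a
      · subst hk; rw [h0]; simp
      · rw [BMZaux.rows_flip w c σ a hk]
    have h := repr_eq (BMZaux.flip σ a) (fun k => co σ x k)
    rw [hx] at h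
    exact congrFun h i
  -- convex hull membership characterizations
  have hroinj : ∀ σ, Function.Injective (rows w c σ) := fun σ => (li σ).injective
  have mem_hull : ∀ σ (x : CSp d s), x ∈ Fface w c σ ↔
      ((∀ i, 0 ≤ co σ x i) ∧ ∑ i, co σ x i = 1) := by
    intro σ x
    have hset : Set.range (rows w c σ) = ↑(Finset.univ.image (rows w c σ)) := by
      rw [Finset.coe_image, Finset.coe_univ, Set.image_univ]
    constructor
    · intro hx
      have hx' : x ∈ convexHull ℝ (↑(Finset.univ.image (rows w c σ)) : Set (CSp d s)) := by
        rw [← hset]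
        exact hx
      rw [Finset.convexHull_eq] at hx'
      obtain ⟨wt, hw0, hw1, hcm⟩ := hx'
      rw [Finset.centerMass_eq_of_sum_1 _ _ hw1] at hcm
      rw [Finset.sum_image (fun i _ j _ h => hroinj σ h)] at hw1
      rw [Finset.sum_image (fun i _ j _ h => hroinj σ h)] at hcm
      simp only [id_eq] at hcm
      have hco : co σ x = fun i => wt (rows w c σ i) := by
        rw [← hcm]
        exact repr_eq σ _
      constructor
      · intro i
        rw [congrFun hco i]
        exact hw0 _ (Finset.mem_image_of_mem _ (Finset.mem_univ i))
      · calc ∑ i, co σ x i = ∑ i, wt (rows w c σ i) :=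
              Finset.sum_congr rfl fun i _ => congrFun hco i
        _ = 1 := hw1
    · rintro ⟨h0, h1⟩
      have hcm : Finset.univ.centerMass (fun i => co σ x i) (rows w c σ) = x := by
        rw [Finset.centerMass_eq_of_sum_1 _ _ h1]
        exact sum_co σ x
      show x ∈ convexHull ℝ (Set.range (rows w c σ))
      rw [← hcm]
      exact Finset.centerMass_mem_convexHull _ (fun i _ => h0 i) (by rw [h1]; exact one_pos)
        (fun i _ => Set.mem_range_self i)
  -- dichotomy: a generic direction has no zero coordinate among nonnegative ones
  have dich : ∀ (y : CSp d s), y ≠ 0 → GenericRay w c y → ∀ σ,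
      (∀ i, 0 ≤ co σ y i) → ∀ a, co σ y a ≠ 0 := by
    intro y hy hgy σ hnn a h0
    have hSnn : 0 ≤ ∑ i, co σ y i := Finset.sum_nonneg fun i _ => hnn i
    have hSne : (∑ i, co σ y i) ≠ 0 := by
      intro hS0
      apply hy
      have hall := (Finset.sum_eq_zero_iff_of_nonneg fun i _ => hnn i).1 hS0
      rw [← sum_co σ y]
      exact Finset.sum_eq_zero fun i hi => by rw [hall i hi, zero_smul]
    have hSpos : 0 < ∑ i, co σ y i := lt_of_le_of_ne hSnn (Ne.symm hSne)
    have hsumerase : ∑ i ∈ Finset.univ.erase a, co σ y i = ∑ i, co σ y i :=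
      Finset.sum_erase _ h0
    have h4 : ∑ i ∈ Finset.univ.erase a, co σ y i • rows w c σ i = y := by
      rw [Finset.sum_erase _ (by rw [h0, zero_smul])]
      exact sum_co σ y
    have hW1 : ∑ i ∈ Finset.univ.erase a, co σ y i / (∑ j, co σ y j) = 1 := by
      rw [← Finset.sum_div, hsumerase, div_self hSpos.ne']
    have hcm : (Finset.univ.erase a).centerMass
        (fun i => co σ y i / (∑ j, co σ y j)) (rows w c σ) = (∑ j, co σ y j)⁻¹ • y := by
      rw [Finset.centerMass_eq_of_sum_1 _ _ hW1]
      calc ∑ i ∈ Finset.univ.erase a, (co σ y i / (∑ j, co σ y j)) • rows w c σ i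
          = ∑ i ∈ Finset.univ.erase a, (∑ j, co σ y j)⁻¹ • (co σ y i • rows w c σ i) := by
            refine Finset.sum_congr rfl fun i _ => ?_
            rw [smul_smul, div_eq_inv_mul]
        _ = (∑ j, co σ y j)⁻¹ • ∑ i ∈ Finset.univ.erase a, co σ y i • rows w c σ i := by
            rw [Finset.smul_sum]
        _ = (∑ j, co σ y j)⁻¹ • y := by rw [h4]
    apply hgy σ a ((∑ j, co σ y j)⁻¹ • y) ⟨(∑ j, co σ y j)⁻¹, inv_nonneg.2 hSnn, rfl⟩
    show ((∑ j, co σ y j)⁻¹ • y) ∈ convexHull ℝ (rows w c σ '' {i | i ≠ a})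
    rw [← hcm]
    refine Finset.centerMass_mem_convexHull _ (fun i _ => div_nonneg (hnn i) hSpos.le)
      (by rw [hW1]; exact one_pos) (fun i hi => ?_)
    exact ⟨i, Finset.ne_of_mem_erase hi, rfl⟩
  -- hit characterization
  have hitIff : ∀ (y : CSp d s), y ≠ 0 → GenericRay w c y → ∀ σ,
      ((raySet y ∩ Fface w c σ).Nonempty ↔ ∀ i, 0 < co σ y i) := by
    intro y hy hgy σ
    constructor
    · rintro ⟨p, ⟨t, ht0, rfl⟩, hp⟩
      rw [mem_hull σ] at hp
      obtain ⟨hnn, hsum⟩ := hp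
      have hco_smul : ∀ i, co σ (t • y) i = t * co σ y i := by
        intro i
        show ((B σ).repr (t • y)) i = t * ((B σ).repr y) i
        rw [map_smul]
        simp
      have htne : t ≠ 0 := by
        intro ht
        subst ht
        simp only [hco_smul, zero_mul] at hsum
        simp at hsum
      have htpos : 0 < t := lt_of_le_of_ne ht0 (Ne.symm htne)
      have hynn : ∀ i, 0 ≤ co σ y i := by
        intro i
        have := hnn i
        rw [hco_smul i] at this
        nlinarith [this, htpos]
      intro i
      exact lt_of_le_of_ne (hynn i) (Ne.symm (dich y hy hgy σ hynn i))
    · intro hpos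
      set S := ∑ i, co σ y i with hSdef
      have hSpos : 0 < S := Finset.sum_pos (fun i _ => hpos i) Finset.univ_nonempty
      refine ⟨S⁻¹ • y, ⟨S⁻¹, (inv_nonneg.2 hSpos.le), rfl⟩, ?_⟩
      rw [mem_hull σ]
      have hco_smul : ∀ i, co σ (S⁻¹ • y) i = S⁻¹ * co σ y i := by
        intro i
        show ((B σ).repr (S⁻¹ • y)) i = S⁻¹ * ((B σ).repr y) i
        rw [map_smul]
        simp
      constructor
      · intro i
        rw [hco_smul i]
        exact (mul_pos (inv_pos.2 hSpos) (hpos i)).le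
      · simp only [hco_smul]
        rw [← Finset.mul_sum, ← hSdef, inv_mul_cancel₀ hSpos.ne']
  -- the combinatorial degree function
  let F : CSp d s → ℤ := fun x =>
    ∑ σ : PartEnc d s, if (∀ i, 0 < co σ x i) then psgn w c σ else 0
  have degF : ∀ (y : CSp d s), y ≠ 0 → GenericRay w c y → degRay w c y = F y := by
    intro y hy hgy
    refine Finset.sum_congr rfl fun σ _ => ?_
    exact if_congr (hitIff y hy hgy σ) rfl rfl
  -- continuity of coordinates
  have coCont : ∀ σ i, Continuous fun x : CSp d s => co σ x i := by
    intro σ i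
    have h := LinearMap.continuous_of_finiteDimensional ((B σ).coord i)
    have h2 : (fun x : CSp d s => co σ x i) = ⇑((B σ).coord i) := by
      funext x
      rw [Module.Basis.coord_apply]
    rw [h2]
    exact h
  -- local constancy of F at generic directions
  have ballConst : ∀ (y : CSp d s), y ≠ 0 → GenericRay w c y →
      ∀ᶠ x in nhds y, F x = F y := by
    intro y hy hgy
    have hσ : ∀ σ : PartEnc d s, ∀ᶠ x in nhds y,
        ((if (∀ i, 0 < co σ x i) then psgn w c σ else 0)
          = (if (∀ i, 0 < co σ y i) then psgn w c σ else 0)) := by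
      intro σ
      by_cases hpos : ∀ i, 0 < co σ y i
      · have hopen : IsOpen {x : CSp d s | ∀ i, 0 < co σ x i} := by
          have hEq : {x : CSp d s | ∀ i, 0 < co σ x i} = ⋂ i, {x | 0 < co σ x i} := by
            ext x; simp
          rw [hEq]
          exact isOpen_iInter_of_finite fun i => isOpen_lt continuous_const (coCont σ i)
        filter_upwards [hopen.mem_nhds hpos] with x hx
        rw [if_pos hx, if_pos hpos]
      · have hneg : ∃ a, co σ y a < 0 := by
          by_contra hcon
          push_neg at hcon
          obtain ⟨a, ha⟩ := not_forall.1 hpos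
          exact dich y hy hgy σ hcon a (le_antisymm (not_lt.1 ha) (hcon a))
        obtain ⟨a, ha⟩ := hneg
        filter_upwards [(isOpen_lt (coCont σ a) continuous_const).mem_nhds ha] with x hx
        rw [if_neg (fun hall => absurd (hall a) (not_lt.2 hx.le)), if_neg hpos]
    have hall := Filter.eventually_all.2 hσ
    filter_upwards [hall] with x hx
    exact Finset.sum_congr rfl fun σ _ => hx σ
  -- extract metric balls
  obtain ⟨εu, hεu, hballu⟩ : ∃ ε > 0, ∀ ⦃x⦄, dist x u < ε → F x = F u :=
    Metric.eventually_nhds_iff.1 (ballConst u hu hgu)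
  obtain ⟨εv, hεv, hballv⟩ : ∃ ε > 0, ∀ ⦃x⦄, dist x v < ε → F x = F v :=
    Metric.eventually_nhds_iff.1 (ballConst v hv hgv)
  -- choose perturbed endpoints u', v'
  obtain ⟨u', hu'd, hu'ne⟩ := BMZaux.exists_near_forall_ne
    (Finset.univ : Finset (PartEnc d s × Fin (NN d s)))
    (fun p => (B p.1).coord p.2)
    (by
      intro p _
      refine DFunLike.ne_iff.2 ⟨(B p.1) p.2, ?_⟩
      rw [Module.Basis.coord_apply, Module.Basis.repr_self]
      simp)
    u hεu
  have hu'co : ∀ σ (a : Fin (NN d s)), co σ u' a ≠ 0 := by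
    intro σ a
    have h := hu'ne (σ, a) (Finset.mem_univ _)
    rwa [Module.Basis.coord_apply] at h
  let G : PartEnc d s × Fin (NN d s) × Fin (NN d s) → (CSp d s →ₗ[ℝ] ℝ) := fun p =>
    co p.1 u' p.2.1 • (B p.1).coord p.2.2 - co p.1 u' p.2.2 • (B p.1).coord p.2.1
  obtain ⟨v', hv'd, hv'ne⟩ := BMZaux.exists_near_forall_ne
    (Finset.univ.filter (fun p : PartEnc d s × Fin (NN d s) × Fin (NN d s) => p.2.1 ≠ p.2.2))
    G
    (by
      intro p hp
      have hne : p.2.1 ≠ p.2.2 := (Finset.mem_filter.1 hp).2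
      refine DFunLike.ne_iff.2 ⟨(B p.1) p.2.1, ?_⟩
      simp only [G, LinearMap.sub_apply, LinearMap.smul_apply, Module.Basis.coord_apply,
        Module.Basis.repr_self_apply, smul_eq_mul, LinearMap.zero_apply]
      rw [if_neg hne, if_true]
      simp only [mul_zero, mul_one, zero_sub, ne_eq, neg_eq_zero]
      exact hu'co p.1 p.2.2)
    v hεv
  have hP : ∀ σ (a b : Fin (NN d s)), a ≠ b →
      co σ u' a * co σ v' b - co σ u' b * co σ v' a ≠ 0 := by
    intro σ a b hab
    have h := hv'ne (σ, a, b) (Finset.mem_filter.2 ⟨Finset.mem_univ _, hab⟩)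
    simpa only [G, LinearMap.sub_apply, LinearMap.smul_apply, Module.Basis.coord_apply,
      smul_eq_mul] using h
  -- the path
  set γ : ℝ → CSp d s := fun t => u' + t • (v' - u') with hγdef
  have coγ : ∀ σ (i : Fin (NN d s)) (t : ℝ),
      co σ (γ t) i = co σ u' i + t * (co σ v' i - co σ u' i) := by
    intro σ i t
    show ((B σ).repr (u' + t • (v' - u'))) i = _
    rw [map_add, map_smul, map_sub]
    simp [co]
  have coγcont : ∀ σ (i : Fin (NN d s)), Continuous fun t : ℝ => co σ (γ t) i := by
    intro σ i
    have : (fun t : ℝ => co σ (γ t) i)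
        = fun t : ℝ => co σ u' i + t * (co σ v' i - co σ u' i) := by
      funext t; rw [coγ]
    rw [this]
    exact continuous_const.add (continuous_id.mul continuous_const)
  -- no two coordinates of the same σ vanish at the same time
  have twoZero : ∀ σ (t : ℝ) (a b : Fin (NN d s)), a ≠ b →
      co σ (γ t) a = 0 → co σ (γ t) b = 0 → False := by
    intro σ t a b hab ha hb
    rw [coγ] at ha hb
    apply hP σ a b hab
    linear_combination (co σ u' a * hb - co σ u' b * ha)
      + (co σ v' b * ha - co σ v' a * hb)
  -- each coordinate vanishes at most once along the path
  have oneRoot : ∀ σ (a : Fin (NN d s)) (t1 t2 : ℝ), t1 ≠ t2 →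
      co σ (γ t1) a = 0 → co σ (γ t2) a = 0 → False := by
    intro σ a t1 t2 hne h1 h2
    rw [coγ] at h1 h2
    have h3 : (t1 - t2) * (co σ v' a - co σ u' a) = 0 := by linear_combination h1 - h2
    have h4 : co σ v' a - co σ u' a = 0 :=
      (mul_eq_zero.1 h3).resolve_left (sub_ne_zero.2 hne)
    have h5 : co σ u' a = 0 := by rw [h4, mul_zero, add_zero] at h1; exact h1
    have h6 : co σ v' a = 0 := by linarith [h4, h5]
    obtain ⟨b, hb⟩ := exists_ne a
    exact hP σ a b (Ne.symm hb) (by rw [h5, h6]; ring)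
  -- the interpolating function
  let TT : PartEnc d s → ℝ → ℚ := fun σ t =>
    (psgn w c σ : ℚ) * ∏ i, BMZaux.qq (co σ (γ t) i)
  let H : ℝ → ℚ := fun t => ∑ σ : PartEnc d s, TT σ t
  have Hval : ∀ t : ℝ, (∀ σ (i : Fin (NN d s)), co σ (γ t) i ≠ 0) →
      H t = (F (γ t) : ℚ) := by
    intro t ht
    show (∑ σ : PartEnc d s, TT σ t)
        = ((∑ σ : PartEnc d s, if (∀ i, 0 < co σ (γ t) i) then psgn w c σ else 0 : ℤ) : ℚ)
    rw [Int.cast_sum]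
    refine Finset.sum_congr rfl fun σ _ => ?_
    by_cases hpos : ∀ i, 0 < co σ (γ t) i
    · rw [if_pos hpos]
      show (psgn w c σ : ℚ) * ∏ i, BMZaux.qq (co σ (γ t) i) = _
      rw [Finset.prod_eq_one fun i _ => BMZaux.qq_pos (hpos i), mul_one]
    · obtain ⟨a, ha⟩ := not_forall.1 hpos
      have ha' : co σ (γ t) a < 0 := lt_of_le_of_ne (not_lt.1 ha) (ht σ a)
      rw [if_neg hpos]
      show (psgn w c σ : ℚ) * ∏ i, BMZaux.qq (co σ (γ t) i) = _
      rw [Finset.prod_eq_zero (Finset.mem_univ a) (BMZaux.qq_neg ha'), mul_zero]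
      simp
  -- H is locally constant
  have locConst : ∀ t0 : ℝ, ∀ᶠ t in nhds t0, H t = H t0 := by
    intro t0
    set Scrit : Finset (PartEnc d s) := Finset.univ.filter
      (fun σ => ∃ a, co σ (γ t0) a = 0 ∧ ∀ b, b ≠ a → 0 < co σ (γ t0) b) with hScrit
    have aOfspec : ∀ σ ∈ Scrit,
        ∃ a, co σ (γ t0) a = 0 ∧ ∀ b, b ≠ a → 0 < co σ (γ t0) b :=
      fun σ hσ => (Finset.mem_filter.1 hσ).2
    choose aOf haOf using aOfspec
    have uniq : ∀ σ (a a' : Fin (NN d s)),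
        (co σ (γ t0) a = 0 ∧ ∀ b, b ≠ a → 0 < co σ (γ t0) b) →
        (co σ (γ t0) a' = 0 ∧ ∀ b, b ≠ a' → 0 < co σ (γ t0) b) → a = a' := by
      intro σ a a' h h'
      by_contra hne
      exact absurd h'.1 (ne_of_gt (h.2 a' (fun e => hne e.symm)))
    have pairlem : ∀ σ (a : Fin (NN d s)), co σ (γ t0) a = 0 →
        (∀ b, b ≠ a → 0 < co σ (γ t0) b) →
        (co (BMZaux.flip σ a) (γ t0) a = 0 ∧
          ∀ b, b ≠ a → 0 < co (BMZaux.flip σ a) (γ t0) b) := by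
      intro σ a h0 hpos
      constructor
      · have h := cram' σ a (γ t0)
        rw [h0, zero_mul] at h
        exact (mul_eq_zero.1 h).resolve_right (Dne _)
      · intro b hb
        rw [onwall σ a (γ t0) h0 b hb]
        exact hpos b hb
    -- Eventual equality for non-critical σ
    have Ev1 : ∀ σ : PartEnc d s, σ ∉ Scrit →
        ∀ᶠ t in nhds t0, TT σ t = TT σ t0 := by
      intro σ hσ
      by_cases hz : ∃ a, co σ (γ t0) a = 0
      · obtain ⟨a, ha⟩ := hz
        have hmix : ¬ ∀ b, b ≠ a → 0 < co σ (γ t0) b := fun hall =>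
          hσ (Finset.mem_filter.2 ⟨Finset.mem_univ _, ⟨a, ha, hall⟩⟩)
        push_neg at hmix
        obtain ⟨b, hba, hble⟩ := hmix
        have hbne : co σ (γ t0) b ≠ 0 := fun h => twoZero σ t0 b a hba h ha
        have hblt : co σ (γ t0) b < 0 := lt_of_le_of_ne hble hbne
        filter_upwards [(isOpen_lt (coγcont σ b) continuous_const).mem_nhds hblt] with t ht
        show (psgn w c σ : ℚ) * ∏ i, BMZaux.qq (co σ (γ t) i)
            = (psgn w c σ : ℚ) * ∏ i, BMZaux.qq (co σ (γ t0) i)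
        rw [Finset.prod_eq_zero (Finset.mem_univ b) (BMZaux.qq_neg ht),
          Finset.prod_eq_zero (Finset.mem_univ b) (BMZaux.qq_neg hblt)]
      · push_neg at hz
        have hall : ∀ᶠ t in nhds t0, ∀ i, BMZaux.qq (co σ (γ t) i)
            = BMZaux.qq (co σ (γ t0) i) := by
          rw [Filter.eventually_all]
          intro i
          rcases lt_or_gt_of_ne (hz i) with hlt | hgt
          · filter_upwards [(isOpen_lt (coγcont σ i) continuous_const).mem_nhds hlt] with t ht
            rw [BMZaux.qq_neg ht, BMZaux.qq_neg hlt]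
          · filter_upwards [(isOpen_lt continuous_const (coγcont σ i)).mem_nhds hgt] with t ht
            rw [BMZaux.qq_pos ht, BMZaux.qq_pos hgt]
        filter_upwards [hall] with t ht
        show (psgn w c σ : ℚ) * ∏ i, BMZaux.qq (co σ (γ t) i)
            = (psgn w c σ : ℚ) * ∏ i, BMZaux.qq (co σ (γ t0) i)
        rw [Finset.prod_congr rfl fun i _ => ht i]
    -- Eventual pair equality for critical σ
    have Ev2 : ∀ σ : PartEnc d s, ∀ a : Fin (NN d s), co σ (γ t0) a = 0 →
        (∀ b, b ≠ a → 0 < co σ (γ t0) b) →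
        ∀ᶠ t in nhds t0, TT σ t + TT (BMZaux.flip σ a) t
          = TT σ t0 + TT (BMZaux.flip σ a) t0 := by
      intro σ a h0 hpos
      obtain ⟨h0', hpos'⟩ := pairlem σ a h0 hpos
      have EvPos : ∀ᶠ t in nhds t0, ∀ b : Fin (NN d s), b ≠ a →
          (0 < co σ (γ t) b ∧ 0 < co (BMZaux.flip σ a) (γ t) b) := by
        rw [Filter.eventually_all]
        intro b
        by_cases hba : b = a
        · exact Filter.Eventually.of_forall fun t h => absurd hba h
        · filter_upwards [(isOpen_lt continuous_const (coγcont σ b)).mem_nhds (hpos b hba),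
            (isOpen_lt continuous_const (coγcont (BMZaux.flip σ a) b)).mem_nhds (hpos' b hba)]
            with t h1 h2 _
          exact ⟨h1, h2⟩
      have hprod : ∀ (τ : PartEnc d s) (t : ℝ), (∀ b, b ≠ a → 0 < co τ (γ t) b) →
          ∏ i, BMZaux.qq (co τ (γ t) i) = BMZaux.qq (co τ (γ t) a) := by
        intro τ t hb
        rw [← Finset.mul_prod_erase Finset.univ _ (Finset.mem_univ a),
          Finset.prod_eq_one fun b hbmem => BMZaux.qq_pos (hb b (Finset.ne_of_mem_erase hbmem)),
          mul_one]
      have hρ : ∀ y : CSp d s, co (BMZaux.flip σ a) y a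
          = (D σ / D (BMZaux.flip σ a)) * co σ y a := by
        intro y
        rw [div_mul_eq_mul_div, eq_div_iff (Dne (BMZaux.flip σ a))]
        linear_combination cram' σ a y
      filter_upwards [EvPos] with t hEv
      show (psgn w c σ : ℚ) * ∏ i, BMZaux.qq (co σ (γ t) i)
          + (psgn w c (BMZaux.flip σ a) : ℚ) * ∏ i, BMZaux.qq (co (BMZaux.flip σ a) (γ t) i)
          = (psgn w c σ : ℚ) * ∏ i, BMZaux.qq (co σ (γ t0) i)
          + (psgn w c (BMZaux.flip σ a) : ℚ) * ∏ i, BMZaux.qq (co (BMZaux.flip σ a) (γ t0) i)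
      rw [hprod σ t (fun b hb => (hEv b hb).1), hprod (BMZaux.flip σ a) t (fun b hb => (hEv b hb).2),
        hprod σ t0 hpos, hprod (BMZaux.flip σ a) t0 hpos']
      rw [hρ (γ t), hρ (γ t0), h0, mul_zero]
      rcases lt_or_gt_of_ne (mul_ne_zero (Dne σ) (Dne (BMZaux.flip σ a))) with hDD | hDD
      · -- opposite determinant signs : psgn σ' = psgn σ
        have hρneg : D σ / D (BMZaux.flip σ a) < 0 := by
          rcases mul_neg_iff.1 hDD with ⟨h1, h2⟩ | ⟨h1, h2⟩
          · exact div_neg_of_pos_of_neg h1 h2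
          · exact div_neg_of_neg_of_pos h1 h2
        have hpsgn : psgn w c (BMZaux.flip σ a) = psgn w c σ := by
          unfold psgn
          rw [gsgn_eq, gsgn_eq, BMZaux.csgn_flip]
          have hsg : sgnR (D (BMZaux.flip σ a)) = - sgnR (D σ) := by
            rcases mul_neg_iff.1 hDD with ⟨h1, h2⟩ | ⟨h1, h2⟩
            · rw [BMZaux.sgnR_of_neg h2, BMZaux.sgnR_of_pos h1]
            · rw [BMZaux.sgnR_of_pos h2, BMZaux.sgnR_of_neg h1]
              norm_num
          rw [hsg]
          ring
        rw [BMZaux.qq_mul_neg hρneg, hpsgn, BMZaux.qq_zero]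
        ring
      · -- same determinant signs : psgn σ' = - psgn σ
        have hρpos : 0 < D σ / D (BMZaux.flip σ a) := by
          rcases mul_pos_iff.1 hDD with ⟨h1, h2⟩ | ⟨h1, h2⟩
          · exact div_pos h1 h2
          · exact div_pos_of_neg_of_neg h1 h2
        have hpsgn : psgn w c (BMZaux.flip σ a) = - psgn w c σ := by
          unfold psgn
          rw [gsgn_eq, gsgn_eq, BMZaux.csgn_flip]
          have hsg : sgnR (D (BMZaux.flip σ a)) = sgnR (D σ) := by
            rcases mul_pos_iff.1 hDD with ⟨h1, h2⟩ | ⟨h1, h2⟩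
            · rw [BMZaux.sgnR_of_pos h2, BMZaux.sgnR_of_pos h1]
            · rw [BMZaux.sgnR_of_neg h2, BMZaux.sgnR_of_neg h1]
          rw [hsg]
          ring
        rw [BMZaux.qq_mul_pos hρpos, hpsgn]
        push_cast
        ring
    -- combine the eventual statements
    have Ev1' : ∀ᶠ t in nhds t0, ∀ σ : PartEnc d s, σ ∉ Scrit → TT σ t = TT σ t0 := by
      rw [Filter.eventually_all]
      intro σ
      by_cases hσ : σ ∈ Scrit
      · exact Filter.Eventually.of_forall fun t h => absurd hσ h
      · exact (Ev1 σ hσ).mono fun t h _ => h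
    have Ev2' : ∀ᶠ t in nhds t0, ∀ σ : PartEnc d s, ∀ hσ : σ ∈ Scrit,
        TT σ t + TT (BMZaux.flip σ (aOf σ hσ)) t
          = TT σ t0 + TT (BMZaux.flip σ (aOf σ hσ)) t0 := by
      rw [Filter.eventually_all]
      intro σ
      by_cases hσ : σ ∈ Scrit
      · exact (Ev2 σ (aOf σ hσ) (haOf σ hσ).1 (haOf σ hσ).2).mono fun t h _ => h
      · exact Filter.Eventually.of_forall fun t hσ' => absurd hσ' hσ
    filter_upwards [Ev1', Ev2'] with t h1 h2
    have hkey : ∑ σ ∈ Scrit, (TT σ t - TT σ t0) = 0 := by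
      refine Finset.sum_involution (fun σ hσ => BMZaux.flip σ (aOf σ hσ)) ?_ ?_ ?_ ?_
      · intro σ hσ
        have h := h2 σ hσ
        linarith [h]
      · intro σ hσ _
        exact BMZaux.flip_ne σ (aOf σ hσ)
      · intro σ hσ
        refine Finset.mem_filter.2 ⟨Finset.mem_univ _, ⟨aOf σ hσ, ?_, ?_⟩⟩
        · exact (pairlem σ (aOf σ hσ) (haOf σ hσ).1 (haOf σ hσ).2).1
        · exact (pairlem σ (aOf σ hσ) (haOf σ hσ).1 (haOf σ hσ).2).2
      · intro σ hσ
        have hmem : BMZaux.flip σ (aOf σ hσ) ∈ Scrit := by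
          refine Finset.mem_filter.2 ⟨Finset.mem_univ _, ⟨aOf σ hσ, ?_, ?_⟩⟩
          · exact (pairlem σ (aOf σ hσ) (haOf σ hσ).1 (haOf σ hσ).2).1
          · exact (pairlem σ (aOf σ hσ) (haOf σ hσ).1 (haOf σ hσ).2).2
        have ha' : aOf (BMZaux.flip σ (aOf σ hσ)) hmem = aOf σ hσ := by
          refine uniq (BMZaux.flip σ (aOf σ hσ)) _ _ (haOf _ hmem) ?_
          exact pairlem σ (aOf σ hσ) (haOf σ hσ).1 (haOf σ hσ).2
        show BMZaux.flip (BMZaux.flip σ (aOf σ hσ))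
          (aOf (BMZaux.flip σ (aOf σ hσ)) hmem) = σ
        rw [ha', BMZaux.flip_flip]
    have hsum : ∀ r : ℝ, H r = ∑ σ ∈ Scrit, TT σ r
        + ∑ σ ∈ Finset.univ.filter
            (fun σ => ¬ ∃ a, co σ (γ t0) a = 0 ∧ ∀ b, b ≠ a → 0 < co σ (γ t0) b), TT σ r := by
      intro r
      rw [hScrit]
      exact (Finset.sum_filter_add_sum_filter_not Finset.univ _ _).symm
    rw [hsum t, hsum t0]
    have e1 : ∑ σ ∈ Scrit, TT σ t = ∑ σ ∈ Scrit, TT σ t0 := by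
      have h' : ∑ σ ∈ Scrit, TT σ t - ∑ σ ∈ Scrit, TT σ t0 = 0 := by
        rw [← Finset.sum_sub_distrib]
        exact hkey
      linarith [h']
    have e2 : ∑ σ ∈ Finset.univ.filter
          (fun σ => ¬ ∃ a, co σ (γ t0) a = 0 ∧ ∀ b, b ≠ a → 0 < co σ (γ t0) b), TT σ t
        = ∑ σ ∈ Finset.univ.filter
          (fun σ => ¬ ∃ a, co σ (γ t0) a = 0 ∧ ∀ b, b ≠ a → 0 < co σ (γ t0) b), TT σ t0 := by
      refine Finset.sum_congr rfl fun σ hσ => ?_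
      have hσ' : σ ∉ Scrit := by
        rw [hScrit]
        intro hmem
        exact (Finset.mem_filter.1 hσ).2 (Finset.mem_filter.1 hmem).2
      exact h1 σ hσ'
    rw [e1, e2]
  -- H is globally constant
  have Hconst : ∀ t1 t2 : ℝ, H t1 = H t2 :=
    fun t1 t2 => BMZaux.const_of_locally_const H locConst t1 t2
  -- the set of critical times is finite
  have Tfin : {t : ℝ | ∃ σ : PartEnc d s, ∃ a : Fin (NN d s), co σ (γ t) a = 0}.Finite := by
    have hsub : {t : ℝ | ∃ σ : PartEnc d s, ∃ a : Fin (NN d s), co σ (γ t) a = 0}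
        ⊆ ⋃ p : PartEnc d s × Fin (NN d s), {t : ℝ | co p.1 (γ t) p.2 = 0} := by
      rintro t ⟨σ, a, h⟩
      exact Set.mem_iUnion.2 ⟨(σ, a), h⟩
    refine Set.Finite.subset (Set.finite_iUnion fun p => ?_) hsub
    apply Set.Subsingleton.finite
    intro t1 h1 t2 h2
    by_contra hne
    exact oneRoot p.1 p.2 t1 t2 hne h1 h2
  -- pick a good time near 0
  have hgood0 : ∃ t : ℝ, 0 < t ∧ dist (γ t) u < εu ∧
      ∀ σ (a : Fin (NN d s)), co σ (γ t) a ≠ 0 := by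
    set δ0 : ℝ := min 1 ((εu - dist u' u) / (‖v' - u'‖ + 1)) with hδ0def
    have hδ0 : 0 < δ0 := by
      apply lt_min one_pos
      apply div_pos (by linarith [hu'd]) (by positivity)
    obtain ⟨t, ht⟩ : ∃ t, t ∈ Set.Ioo (0:ℝ) δ0 \
        {t : ℝ | ∃ σ : PartEnc d s, ∃ a : Fin (NN d s), co σ (γ t) a = 0} :=
      ((Set.Ioo_infinite hδ0).diff Tfin).nonempty
    obtain ⟨⟨ht0, htδ⟩, htT⟩ := ht
    refine ⟨t, ht0, ?_, ?_⟩
    · have h1 : dist (γ t) u ≤ dist (γ t) u' + dist u' u := dist_triangle _ _ _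
      have h2 : dist (γ t) u' = t * ‖v' - u'‖ := by
        simp only [hγdef, dist_eq_norm, add_sub_cancel_left]
        rw [norm_smul, Real.norm_eq_abs, abs_of_pos ht0]
      have h3 : t * ‖v' - u'‖ < εu - dist u' u := by
        have htδ2 : t < (εu - dist u' u) / (‖v' - u'‖ + 1) := lt_of_lt_of_le htδ (min_le_right _ _)
        calc t * ‖v' - u'‖ ≤ t * (‖v' - u'‖ + 1) := by nlinarith [ht0]
        _ < ((εu - dist u' u) / (‖v' - u'‖ + 1)) * (‖v' - u'‖ + 1) :=
            mul_lt_mul_of_pos_right htδ2 (by positivity)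
        _ = εu - dist u' u := by rw [div_mul_cancel₀]; positivity
      linarith
    · intro σ a h
      exact htT ⟨σ, a, h⟩
  -- pick a good time near 1
  have hgood1 : ∃ t : ℝ, dist (γ t) v < εv ∧
      ∀ σ (a : Fin (NN d s)), co σ (γ t) a ≠ 0 := by
    set δ1 : ℝ := min 1 ((εv - dist v' v) / (‖v' - u'‖ + 1)) with hδ1def
    have hδ1 : 0 < δ1 := by
      apply lt_min one_pos
      apply div_pos (by linarith [hv'd]) (by positivity)
    obtain ⟨t, ht⟩ : ∃ t, t ∈ Set.Ioo (1 - δ1) 1 \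
        {t : ℝ | ∃ σ : PartEnc d s, ∃ a : Fin (NN d s), co σ (γ t) a = 0} :=
      ((Set.Ioo_infinite (by linarith : (1:ℝ) - δ1 < 1)).diff Tfin).nonempty
    obtain ⟨⟨ht0, ht1⟩, htT⟩ := ht
    refine ⟨t, ?_, ?_⟩
    · have h1 : dist (γ t) v ≤ dist (γ t) v' + dist v' v := dist_triangle _ _ _
      have h2 : dist (γ t) v' = (1 - t) * ‖v' - u'‖ := by
        have hrw : γ t - v' = (1 - t) • (u' - v') := by
          simp only [hγdef, smul_sub, sub_smul, one_smul]
          abel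
        rw [dist_eq_norm, hrw, norm_smul, Real.norm_eq_abs, abs_of_pos (by linarith : (0:ℝ) < 1 - t),
          norm_sub_rev]
      have h3 : (1 - t) * ‖v' - u'‖ < εv - dist v' v := by
        have h1t : 1 - t < δ1 := by linarith
        have hlt : 1 - t < (εv - dist v' v) / (‖v' - u'‖ + 1) :=
          lt_of_lt_of_le h1t (min_le_right _ _)
        calc (1 - t) * ‖v' - u'‖ ≤ (1 - t) * (‖v' - u'‖ + 1) := by nlinarith [ht1]
        _ < ((εv - dist v' v) / (‖v' - u'‖ + 1)) * (‖v' - u'‖ + 1) :=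
            mul_lt_mul_of_pos_right hlt (by positivity)
        _ = εv - dist v' v := by rw [div_mul_cancel₀]; positivity
      linarith
    · intro σ a h
      exact htT ⟨σ, a, h⟩
  obtain ⟨t0, ht0pos, ht0ball, ht0nc⟩ := hgood0
  obtain ⟨t1, ht1ball, ht1nc⟩ := hgood1
  have hH0 : H t0 = (F u : ℚ) := by
    rw [Hval t0 ht0nc, hballu ht0ball]
  have hH1 : H t1 = (F v : ℚ) := by
    rw [Hval t1 ht1nc, hballv ht1ball]
  have hFuv : F u = F v := by
    have := Hconst t0 t1
    rw [hH0, hH1] at this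
    exact_mod_cast this
  rw [degF u hu hgu, degF v hv hgv, hFuv]
end

section
/- Let 𝒞 be a BMZ-collection in sufficiently general position, let z* := φ_r(z), and let ρ be the ray emanating from 0 in the direction −z* (this ray is well defined, i.e., z* ≠ 0). Then for every ℛ ∈ 𝔅(𝒞), the intersection ρ ∩ F_ℛ is either empty or consists of exactly one point, and this point lies in the relative interior of F_ℛ. -/
open Finset

section AuxIntrinsic

attribute [local instance] AffineSubspace.toNormedAddTorsor

/-- A point with all barycentric coordinates positive w.r.t. an affinely independent
family lies in the intrinsic (relative) interior of the convex hull of the family. -/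
lemma aux_mem_intrinsicInterior_simplex {E : Type*} [NormedAddCommGroup E] [NormedSpace ℝ E]
    [FiniteDimensional ℝ E] {n : ℕ} {p : Fin n → E} (hp : AffineIndependent ℝ p)
    {μ : Fin n → ℝ} (hpos : ∀ i, 0 < μ i) (hsum : ∑ i, μ i = 1) :
    Finset.univ.affineCombination ℝ p μ ∈ intrinsicInterior ℝ (convexHull ℝ (Set.range p)) := by
  classical
  have hn : n ≠ 0 := by rintro rfl; simp at hsum
  have i0 : Fin n := ⟨0, Nat.pos_of_ne_zero hn⟩
  have hpS : ∀ i, p i ∈ convexHull ℝ (Set.range p) :=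
    fun i => subset_convexHull ℝ _ ⟨i, rfl⟩
  set S : Set E := convexHull ℝ (Set.range p) with hS
  haveI : Nonempty S := ⟨⟨p i0, hpS i0⟩⟩
  set A : AffineSubspace ℝ E := affineSpan ℝ S with hA
  haveI : Nonempty A := ⟨⟨p i0, subset_affineSpan ℝ S (hpS i0)⟩⟩
  set q : Fin n → A := fun i => ⟨p i, subset_affineSpan ℝ S (hpS i)⟩ with hqdef
  have hcomp : ⇑(A.subtype) ∘ q = p := rfl
  have hq : AffineIndependent ℝ q := AffineIndependent.of_comp A.subtype (by rwa [hcomp])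
  have hmapc : ∀ (s : Finset (Fin n)) (wt : Fin n → ℝ), s.sum wt = 1 →
      ((s.affineCombination ℝ q wt : A) : E) = s.affineCombination ℝ p wt := by
    intro s wt hwt
    have := s.map_affineCombination q wt hwt A.subtype
    rw [hcomp] at this
    exact this
  have htot : affineSpan ℝ (Set.range q) = ⊤ := by
    rw [eq_top_iff, ← affineSpan_coe_preimage_eq_top S]
    refine affineSpan_le.2 ?_
    rintro y hy
    have hy' : (y : E) ∈ convexHull ℝ (Set.range p) := hy
    rw [convexHull_range_eq_exists_affineCombination] at hy'
    obtain ⟨s, wt, hw0, hw1, hwe⟩ := hy'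
    have hyq : y = s.affineCombination ℝ q wt := by
      exact Subtype.coe_injective (((hmapc s wt hw1).trans hwe).symm)
    rw [hyq]
    exact affineCombination_mem_affineSpan hw1 q
  let b : AffineBasis (Fin n) ℝ A := ⟨q, hq, htot⟩
  have hb : ⇑b = q := rfl
  set y₀ : A := Finset.univ.affineCombination ℝ q μ with hy₀def
  have hy₀ : (y₀ : E) = Finset.univ.affineCombination ℝ p μ := hmapc _ _ hsum
  have hcoord : ∀ i, b.coord i y₀ = μ i := by
    intro i
    rw [hy₀def, ← hb]
    exact b.coord_apply_combination_of_mem (Finset.mem_univ i) hsum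
  set U : Set A := ⋂ i, (b.coord i) ⁻¹' Set.Ioi (0 : ℝ) with hU
  have hUopen : IsOpen U := isOpen_iInter_of_finite fun i =>
    isOpen_Ioi.preimage (continuous_barycentric_coord b i)
  have hUsub : U ⊆ ((↑) : A → E) ⁻¹' S := by
    intro y hy
    simp only [hU, Set.mem_iInter, Set.mem_preimage, Set.mem_Ioi] at hy
    have h1 : ∑ i, b.coord i y = 1 := b.sum_coord_apply_eq_one y
    have h2 : y = Finset.univ.affineCombination ℝ q (fun i => b.coord i y) := by
      rw [← hb]; exact (b.affineCombination_coord_eq_self y).symm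
    have h3 : (y : E) = Finset.univ.affineCombination ℝ p (fun i => b.coord i y) := by
      conv_lhs => rw [h2]
      exact hmapc _ _ h1
    rw [Set.mem_preimage, h3]
    exact affineCombination_mem_convexHull (fun i _ => (hy i).le) h1
  have hy₀U : y₀ ∈ U := by
    simp only [hU, Set.mem_iInter, Set.mem_preimage, Set.mem_Ioi]
    intro i; rw [hcoord i]; exact hpos i
  have hmem : y₀ ∈ interior (((↑) : A → E) ⁻¹' S) := interior_maximal hUsub hUopen hy₀U
  exact mem_intrinsicInterior.2 ⟨y₀, hmem, hy₀⟩

end AuxIntrinsic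

open BMZ in
/-- Let `𝒞` be a BMZ-collection in sufficiently general position, `z* = φ_r(z)`,
and `ρ` the ray emanating from `0` in direction `-z*` (well defined: `z* ≠ 0`).
Then for every `ℛ ∈ 𝔅(𝒞)` the intersection `ρ ∩ F_ℛ` is either empty or
consists of exactly one point, which lies in the relative interior of `F_ℛ`. -/
theorem ray_meets_each_facet_once (d s : ℕ) (hd : 1 ≤ d)
    (w : Fin (s + 2) → EuclideanSpace ℝ (Fin (s + 1))) (hw : IsRegularSimplex w)
    (c : Idx d s → Pt d) (hc : Function.Injective c)
    (hg : SuffGenPos w c) :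
    zstar w c ≠ 0 ∧
    ∀ σ : PartEnc d s,
      raySet (-(zstar w c)) ∩ Fface w c σ = ∅ ∨
      ∃ x, raySet (-(zstar w c)) ∩ Fface w c σ = {x} ∧
        x ∈ intrinsicInterior ℝ (Fface w c σ) := by
  
  classical
  obtain ⟨hAI, hAff⟩ := hg
  have hNNpos : 0 < NN d s := Nat.mul_pos (Nat.succ_pos d) (Nat.succ_pos s)
  have hclast : ∀ σ : PartEnc d s, classOf (d := d) (s := s) σ (Fin.last (NN d s)) =
      Fin.last (s + 1) := by
    intro σ; simp [classOf]
  have hlast : ∀ σ : PartEnc d s, allClones w c σ (Fin.last (NN d s)) = zstar w c := by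
    intro σ
    simp [allClones, zstar, hclast σ]
  have hzne : zstar w c ≠ 0 := by
    intro h0
    refine hAff (fun _ => 1) ⟨0, Nat.succ_pos _⟩ ?_
    rw [← h0]
    refine subset_affineSpan ℝ _ ⟨Fin.last (NN d s), ?_, hlast _⟩
    simp only [Set.mem_setOf_eq, Ne, Fin.ext_iff, Fin.val_last]
    exact hNNpos.ne'
  refine ⟨hzne, fun σ => ?_⟩
  set u : CSp d s := -(zstar w c) with hu
  have hrange : PhiMinus w c σ (Fin.last (NN d s)) = Set.range (rows w c σ) := by
    ext y
    constructor
    · rintro ⟨i, hi, rfl⟩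
      obtain ⟨j, rfl⟩ := Fin.exists_castSucc_eq.2 hi
      exact ⟨j, rfl⟩
    · rintro ⟨j, rfl⟩
      exact ⟨j.castSucc, (Fin.castSucc_lt_last j).ne, rfl⟩
  have h0span : (0 : CSp d s) ∉ affineSpan ℝ (Set.range (rows w c σ)) := by
    rw [← hrange]; exact hAff σ (Fin.last (NN d s))
  rcases Set.eq_empty_or_nonempty (raySet u ∩ Fface w c σ) with hS | ⟨x, hxray, hxF⟩
  · exact Or.inl hS
  right
  simp only [raySet, Set.mem_setOf_eq] at hxray
  obtain ⟨t, ht0, rfl⟩ := hxray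
  have hxhull : t • u ∈ convexHull ℝ (Set.range (rows w c σ)) := hxF
  have hxA : t • u ∈ affineSpan ℝ (Set.range (rows w c σ)) :=
    (convexHull_subset_affineSpan _) hxhull
  have htpos : 0 < t := by
    rcases ht0.lt_or_eq with h | h
    · exact h
    · exfalso
      apply h0span
      rw [← h, zero_smul] at hxA
      exact hxA
  have huniq : ∀ y ∈ raySet u ∩ Fface w c σ, y = t • u := by
    rintro y ⟨⟨t', ht'0, rfl⟩, hyF⟩
    by_contra hne
    have htne : t - t' ≠ 0 := by
      intro hh
      exact hne (by rw [sub_eq_zero.mp hh])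
    have hyA : t' • u ∈ affineSpan ℝ (Set.range (rows w c σ)) :=
      (convexHull_subset_affineSpan _) hyF
    exfalso
    apply h0span
    have h00 : (t/(t - t')) • ((t' • u) -ᵥ (t • u)) +ᵥ (t • u) = (0 : CSp d s) := by
      rw [vsub_eq_sub, vadd_eq_add, ← sub_smul, smul_smul, ← add_smul]
      have h2 : t/(t - t') * (t - t') = t := div_mul_cancel₀ t htne
      have hc : t/(t - t') * (t' - t) + t = 0 := by linear_combination -h2
      rw [hc, zero_smul]
    rw [← h00]
    exact AffineSubspace.smul_vsub_vadd_mem _ _ hyA hxA hxA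
  have hxcomb := hxhull
  rw [convexHull_range_eq_exists_affineCombination] at hxcomb
  obtain ⟨s₀, wt, hwt0, hwt1, hwte⟩ := hxcomb
  set μ : Fin (NN d s) → ℝ := Set.indicator ↑s₀ wt with hμ
  have hμ1 : ∑ i, μ i = 1 := by
    rw [hμ, Finset.sum_indicator_subset wt (Finset.subset_univ s₀)]
    exact hwt1
  have hμe : Finset.univ.affineCombination ℝ (rows w c σ) μ = t • u := by
    rw [hμ, ← Finset.affineCombination_indicator_subset wt (rows w c σ) (Finset.subset_univ s₀)]
    exact hwte
  have hμ0 : ∀ i, 0 ≤ μ i := fun i =>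
    Set.indicator_apply_nonneg (fun hi => hwt0 i hi)
  have hxlin : ∑ i, μ i • rows w c σ i = t • u := by
    rw [← Finset.affineCombination_eq_linear_combination Finset.univ (rows w c σ) μ hμ1]
    exact hμe
  have hμpos : ∀ j, 0 < μ j := by
    intro j
    rcases (hμ0 j).lt_or_eq with h | h
    · exact h
    exfalso
    apply hAff σ j.castSucc
    have hzQ : zstar w c ∈ affineSpan ℝ (PhiMinus w c σ j.castSucc) :=
      subset_affineSpan ℝ _ ⟨Fin.last (NN d s), (Fin.castSucc_lt_last j).ne', hlast σ⟩
    have hsub : rows w c σ '' {i | i ≠ j} ⊆ PhiMinus w c σ j.castSucc := by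
      rintro y ⟨i, hi, rfl⟩
      exact ⟨i.castSucc, fun hh => hi (Fin.castSucc_injective _ hh), rfl⟩
    have hererase : ∑ i ∈ Finset.univ.erase j, μ i = 1 := by
      rw [Finset.sum_erase _ h.symm]
      exact hμ1
    have hsub1 : ∑ i : {i : Fin (NN d s) // i ≠ j}, μ i.1 = 1 := by
      rw [← Finset.sum_subtype (Finset.univ.erase j) (fun x => by simp) μ]
      exact hererase
    have hsublin : ∑ i : {i : Fin (NN d s) // i ≠ j}, μ i.1 • rows w c σ i.1 = t • u := by
      rw [← Finset.sum_subtype (Finset.univ.erase j) (fun x => by simp)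
          (fun i => μ i • rows w c σ i)]
      rw [Finset.sum_erase (f := fun i => μ i • rows w c σ i) Finset.univ
          (by show μ j • rows w c σ j = 0; rw [← h, zero_smul])]
      exact hxlin
    have hxcvx : t • u ∈ convexHull ℝ (rows w c σ '' {i | i ≠ j}) := by
      rw [Set.image_eq_range]
      have hmem := affineCombination_mem_convexHull (R := ℝ) (s := Finset.univ)
          (v := fun i : {i : Fin (NN d s) // i ≠ j} => rows w c σ i.1)
          (w := fun i => μ i.1) (fun i _ => hμ0 i.1) hsub1
      rwa [Finset.affineCombination_eq_linear_combination _ _ _ hsub1, hsublin] at hmem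
    have hxQ : t • u ∈ affineSpan ℝ (PhiMinus w c σ j.castSucc) :=
      affineSpan_mono ℝ hsub ((convexHull_subset_affineSpan _) hxcvx)
    have h1t : (0:ℝ) < 1 + t := by linarith
    have h00 : (t/(1+t)) • ((zstar w c) -ᵥ (t • u)) +ᵥ (t • u) = (0 : CSp d s) := by
      rw [hu]
      rw [smul_neg, vsub_eq_sub, vadd_eq_add, sub_neg_eq_add]
      rw [smul_add, smul_smul, ← neg_smul, ← add_smul, ← add_smul]
      have h2 : t/(1+t) * (1+t) = t := div_mul_cancel₀ t h1t.ne'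
      have hc : t/(1+t) + t/(1+t) * t + -t = 0 := by linear_combination h2
      rw [hc, zero_smul]
    rw [← h00]
    exact AffineSubspace.smul_vsub_vadd_mem _ _ hzQ hxQ hxQ
  refine ⟨t • u, Set.eq_singleton_iff_unique_mem.2 ⟨⟨⟨t, ht0, rfl⟩, hxF⟩, huniq⟩, ?_⟩
  have hfinal : t • u ∈ intrinsicInterior ℝ (convexHull ℝ (Set.range (rows w c σ))) := by
    rw [← hμe]
    exact aux_mem_intrinsicInterior_simplex (hAI σ) hμpos hμ1
  exact hfinal
end
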